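/- arXiv:1007.0567 — 5 statements merged into one kernel-verified Lean document; each statement's English description precedes it below -/
import Mathlib

section
/- Let a < b be real numbers, 0 < α < 1, and let f, g : [a,b] → ℝ be continuous functions such that the left Riemann–Liouville fractional derivative ₐD_t^α g and the right Riemann–Liouville fractional derivative ₜD_b^α f exist and are continuous at every point t ∈ [a,b]. Then ∫_a^b f(t) · ₐD_t^α g(t) dt = ∫_a^b g(t) · ₜD_b^α f(t) dt. -/
open MeasureTheory intervalIntegral Set Filter

/-- The left Riemann–Liouville fractional derivative of order `α`:
`ₐD_t^α f(t) = (1/Γ(1-α)) · d/dt ∫_a^t (t-τ)^{-α} f(τ) dτ`. -/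
noncomputable def leftRL (a α : ℝ) (f : ℝ → ℝ) (t : ℝ) : ℝ :=
  (1 / Real.Gamma (1 - α)) *
    deriv (fun s => ∫ τ in a..s, (s - τ) ^ (-α) * f τ) t

/-- The right Riemann–Liouville fractional derivative of order `α`:
`ₜD_b^α f(t) = (-1/Γ(1-α)) · d/dt ∫_t^b (τ-t)^{-α} f(τ) dτ`. -/
noncomputable def rightRL (b α : ℝ) (f : ℝ → ℝ) (t : ℝ) : ℝ :=
  (-1 / Real.Gamma (1 - α)) *
    deriv (fun s => ∫ τ in s..b, (τ - s) ^ (-α) * f τ) t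

lemma realBeta {α : ℝ} (h0 : 0 < α) (h1 : α < 1) :
    ∫ x in (0:ℝ)..1, x ^ (α - 1) * (1 - x) ^ (-α) = Real.Gamma α * Real.Gamma (1 - α) := by
  have hβ := Complex.Gamma_mul_Gamma_eq_betaIntegral (s := (α:ℂ)) (t := ((1 - α : ℝ):ℂ))
    (by simpa using h0) (by simpa using sub_pos.mpr h1)
  have hsum : ((α:ℂ) + ((1-α:ℝ):ℂ)) = 1 := by push_cast; ring
  rw [hsum, Complex.Gamma_one, one_mul] at hβ
  have key : Complex.betaIntegral (α:ℂ) ((1-α:ℝ):ℂ)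
      = ((∫ x in (0:ℝ)..1, x ^ (α - 1) * (1 - x) ^ (-α) : ℝ) : ℂ) := by
    rw [Complex.betaIntegral, ← intervalIntegral.integral_ofReal]
    apply intervalIntegral.integral_congr
    intro x hx
    rw [Set.uIcc_of_le (by norm_num : (0:ℝ) ≤ 1)] at hx
    show (x:ℂ) ^ ((α:ℂ) - 1) * (1 - (x:ℂ)) ^ (((1-α:ℝ):ℂ) - 1) = ((x ^ (α - 1) * (1 - x) ^ (-α) : ℝ) : ℂ)
    rw [Complex.ofReal_mul, Complex.ofReal_cpow hx.1,
      Complex.ofReal_cpow (by linarith [hx.2] : (0:ℝ) ≤ 1 - x)]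
    push_cast
    ring_nf
  rw [Complex.Gamma_ofReal, Complex.Gamma_ofReal, ← Complex.ofReal_mul] at hβ
  have := hβ.trans key
  exact_mod_cast this.symm

lemma kernelBeta {p q τ t : ℝ} (hpq : p + q = -1) (hτt : τ < t) :
    ∫ s in τ..t, (t - s) ^ p * (s - τ) ^ q = ∫ x in (0:ℝ)..1, (1 - x) ^ p * x ^ q := by
  have hd : (0:ℝ) < t - τ := sub_pos.mpr hτt
  have h := intervalIntegral.integral_comp_mul_add (a := (0:ℝ)) (b := 1)
      (fun s => (t - s) ^ p * (s - τ) ^ q) (ne_of_gt hd) τ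
  have h2 : ∀ x ∈ Set.uIcc (0:ℝ) 1,
      (t - ((t - τ) * x + τ)) ^ p * (((t - τ) * x + τ) - τ) ^ q
        = (t - τ) ^ (p + q) * ((1 - x) ^ p * x ^ q) := by
    intro x hx
    rw [Set.uIcc_of_le (by norm_num : (0:ℝ) ≤ 1)] at hx
    have e1 : t - ((t - τ) * x + τ) = (t - τ) * (1 - x) := by ring
    have e2 : ((t - τ) * x + τ) - τ = (t - τ) * x := by ring
    rw [e1, e2, Real.mul_rpow hd.le (by linarith [hx.2]), Real.mul_rpow hd.le hx.1,
      Real.rpow_add hd]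
    ring
  rw [intervalIntegral.integral_congr h2] at h
  rw [intervalIntegral.integral_const_mul] at h
  simp only [mul_zero, zero_add, mul_one, sub_add_cancel] at h
  rw [hpq, Real.rpow_neg_one] at h
  rw [smul_eq_mul] at h
  have := mul_left_cancel₀ (inv_ne_zero (ne_of_gt hd)) h
  exact this.symm

lemma II_ker {p : ℝ} (hp : -1 < p) (c a x : ℝ) :
    IntervalIntegrable (fun s => (x - s) ^ p) volume c a := by
  simpa using (intervalIntegrable_rpow' (a := x - c) (b := x - a) hp).comp_sub_left x

lemma int_ker {p : ℝ} (hp : -1 < p) {a x : ℝ} (h : a ≤ x) :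
    ∫ s in a..x, (x - s) ^ p = (x - a) ^ (p + 1) / (p + 1) := by
  rw [intervalIntegral.integral_comp_sub_left (fun s => s ^ p) x, sub_self,
    integral_rpow (Or.inl hp), Real.zero_rpow (by linarith : p + 1 ≠ 0)]
  ring

lemma int_ker2 {p : ℝ} (hp : -1 < p) {a x y : ℝ} (h : a ≤ x) (hxy : x ≤ y) :
    ∫ s in a..x, (y - s) ^ p = ((y - a) ^ (p + 1) - (y - x) ^ (p + 1)) / (p + 1) := by
  rw [intervalIntegral.integral_comp_sub_left (fun s => s ^ p) y,
    integral_rpow (Or.inl hp)]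

lemma abel_estimate {a b p M : ℝ} (hp1 : -1 < p) (hp0 : p ≤ 0) {u : ℝ → ℝ}
    (hu : Continuous u) (hM : ∀ s ∈ Set.Icc a b, |u s| ≤ M)
    {x y : ℝ} (hax : a ≤ x) (hxy : x ≤ y) (hyb : y ≤ b) :
    |(∫ s in a..y, (y - s) ^ p * u s) - ∫ s in a..x, (x - s) ^ p * u s|
      ≤ 2 * M * (y - x) ^ (p + 1) / (p + 1) := by
  have hp1' : (0:ℝ) < p + 1 := by linarith
  have hM0 : 0 ≤ M := le_trans (abs_nonneg _) (hM a ⟨le_refl a, by linarith⟩)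
  have IIx : IntervalIntegrable (fun s => (x - s) ^ p * u s) volume a x :=
    (II_ker hp1 a x x).mul_continuousOn hu.continuousOn
  have IIy1 : IntervalIntegrable (fun s => (y - s) ^ p * u s) volume a x :=
    (II_ker hp1 a x y).mul_continuousOn hu.continuousOn
  have IIy2 : IntervalIntegrable (fun s => (y - s) ^ p * u s) volume x y :=
    (II_ker hp1 x y y).mul_continuousOn hu.continuousOn
  have hsplit : (∫ s in a..y, (y - s) ^ p * u s)
      = (∫ s in a..x, (y - s) ^ p * u s) + ∫ s in x..y, (y - s) ^ p * u s :=
    (intervalIntegral.integral_add_adjacent_intervals IIy1 IIy2).symm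
  have bound2 : |∫ s in x..y, (y - s) ^ p * u s| ≤ M * (y - x) ^ (p + 1) / (p + 1) := by
    have : ‖∫ s in x..y, (y - s) ^ p * u s‖ ≤ |∫ s in x..y, M * (y - s) ^ p| := by
      apply intervalIntegral.norm_integral_le_abs_of_norm_le
      · filter_upwards [ae_restrict_mem measurableSet_uIoc] with s hs
        rw [Set.uIoc_of_le hxy] at hs
        have h1 : 0 ≤ (y - s) ^ p := Real.rpow_nonneg (by linarith [hs.2]) p
        rw [Real.norm_eq_abs, abs_mul, abs_of_nonneg h1, mul_comm]
        exact mul_le_mul_of_nonneg_right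
          (hM s ⟨by linarith [hs.1], by linarith [hs.2]⟩) h1
      · exact (II_ker hp1 x y y).const_mul M
    rw [abs_of_nonneg (intervalIntegral.integral_nonneg hxy (fun s hs =>
        mul_nonneg hM0 (Real.rpow_nonneg (by linarith [hs.2]) p))),
      intervalIntegral.integral_const_mul, int_ker hp1 hxy] at this
    calc |∫ s in x..y, (y - s) ^ p * u s| ≤ M * ((y - x) ^ (p + 1) / (p + 1)) := this
      _ = M * (y - x) ^ (p + 1) / (p + 1) := by ring
  have bound1 : |(∫ s in a..x, (y - s) ^ p * u s) - ∫ s in a..x, (x - s) ^ p * u s|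
      ≤ M * (y - x) ^ (p + 1) / (p + 1) := by
    rw [← intervalIntegral.integral_sub IIy1 IIx]
    have : ‖∫ s in a..x, ((y - s) ^ p * u s - (x - s) ^ p * u s)‖
        ≤ |∫ s in a..x, M * ((x - s) ^ p - (y - s) ^ p)| := by
      apply intervalIntegral.norm_integral_le_abs_of_norm_le
      · have hae : ∀ᵐ s ∂volume.restrict (Set.uIoc a x), s ≠ x := by
          refine ae_restrict_of_ae ?_
          rw [ae_iff]
          simp only [not_not, Set.setOf_eq_eq_singleton]
          exact measure_singleton x
        filter_upwards [ae_restrict_mem measurableSet_uIoc, hae] with s hs hsx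
        rw [Set.uIoc_of_le hax] at hs
        have hsx' : s < x := lt_of_le_of_ne hs.2 hsx
        have h1 : (y - s) ^ p ≤ (x - s) ^ p :=
          Real.rpow_le_rpow_of_nonpos (by linarith) (by linarith) hp0
        have h2 : 0 ≤ (y - s) ^ p := Real.rpow_nonneg (by linarith) p
        rw [← sub_mul, Real.norm_eq_abs, abs_mul, abs_of_nonpos (by linarith), mul_comm,
          neg_sub]
        exact mul_le_mul_of_nonneg_right
          (hM s ⟨le_of_lt hs.1, by linarith⟩) (by linarith)
      · exact ((II_ker hp1 a x x).sub (II_ker hp1 a x y)).const_mul M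
    have hnn : 0 ≤ ∫ s in a..x, M * ((x - s) ^ p - (y - s) ^ p) := by
      apply intervalIntegral.integral_nonneg_of_ae_restrict hax
      have hae : ∀ᵐ s ∂volume.restrict (Set.Icc a x), s ≠ x := by
        refine ae_restrict_of_ae ?_
        rw [ae_iff]
        simp only [not_not, Set.setOf_eq_eq_singleton]
        exact measure_singleton x
      filter_upwards [ae_restrict_mem measurableSet_Icc, hae] with s hs hsx
      have hsx' : s < x := lt_of_le_of_ne hs.2 hsx
      have h1 : (y - s) ^ p ≤ (x - s) ^ p :=
        Real.rpow_le_rpow_of_nonpos (by linarith) (by linarith) hp0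
      exact mul_nonneg hM0 (by linarith)
    rw [abs_of_nonneg hnn, intervalIntegral.integral_const_mul,
      intervalIntegral.integral_sub (II_ker hp1 a x x) (II_ker hp1 a x y),
      int_ker hp1 hax, int_ker2 hp1 hax hxy] at this
    refine le_trans this ?_
    have hmono : (x - a) ^ (p + 1) ≤ (y - a) ^ (p + 1) :=
      Real.rpow_le_rpow (by linarith) (by linarith) hp1'.le
    have : (x - a) ^ (p + 1) / (p + 1) - ((y - a) ^ (p + 1) - (y - x) ^ (p + 1)) / (p + 1)
        ≤ (y - x) ^ (p + 1) / (p + 1) := by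
      rw [div_sub_div_same, div_le_div_iff_of_pos_right hp1']
      linarith
    calc M * ((x - a) ^ (p + 1) / (p + 1) - ((y - a) ^ (p + 1) - (y - x) ^ (p + 1)) / (p + 1))
        ≤ M * ((y - x) ^ (p + 1) / (p + 1)) := mul_le_mul_of_nonneg_left this hM0
      _ = M * (y - x) ^ (p + 1) / (p + 1) := by ring
  calc |(∫ s in a..y, (y - s) ^ p * u s) - ∫ s in a..x, (x - s) ^ p * u s|
      = |((∫ s in a..x, (y - s) ^ p * u s) - ∫ s in a..x, (x - s) ^ p * u s)
          + ∫ s in x..y, (y - s) ^ p * u s| := by rw [hsplit]; exact congrArg abs (by ring)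
    _ ≤ |(∫ s in a..x, (y - s) ^ p * u s) - ∫ s in a..x, (x - s) ^ p * u s|
          + |∫ s in x..y, (y - s) ^ p * u s| := abs_add_le _ _
    _ ≤ M * (y - x) ^ (p + 1) / (p + 1) + M * (y - x) ^ (p + 1) / (p + 1) :=
        add_le_add bound1 bound2
    _ = 2 * M * (y - x) ^ (p + 1) / (p + 1) := by ring

lemma abel_continuousOn {a b p : ℝ} (hp1 : -1 < p) (hp0 : p ≤ 0) {u : ℝ → ℝ}
    (hu : Continuous u) :
    ContinuousOn (fun x => ∫ s in a..x, (x - s) ^ p * u s) (Set.Icc a b) := by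
  rcases le_or_gt a b with hab | hab
  · have hp1' : (0:ℝ) < p + 1 := by linarith
    obtain ⟨M, hM⟩ : ∃ M, ∀ s ∈ Set.Icc a b, |u s| ≤ M := by
      obtain ⟨M, hM⟩ := (isCompact_Icc (a := a) (b := b)).exists_bound_of_continuousOn
        hu.continuousOn
      exact ⟨M, fun s hs => hM s hs⟩
    set K : ℝ → ℝ := fun x => ∫ s in a..x, (x - s) ^ p * u s with hK
    have key : ∀ x ∈ Set.Icc a b, ∀ y ∈ Set.Icc a b,
        |K y - K x| ≤ 2 * M * |y - x| ^ (p + 1) / (p + 1) := by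
      intro x hx y hy
      rcases le_total x y with h | h
      · rw [abs_of_nonneg (by linarith : (0:ℝ) ≤ y - x)]
        exact abel_estimate hp1 hp0 hu hM hx.1 h hy.2
      · rw [abs_sub_comm, abs_of_nonpos (by linarith : y - x ≤ 0), neg_sub]
        exact abel_estimate hp1 hp0 hu hM hy.1 h hx.2
    intro x hx
    have h0 : Tendsto (fun y => 2 * M * |y - x| ^ (p + 1) / (p + 1))
        (nhdsWithin x (Set.Icc a b)) (nhds 0) := by
      have h1 : Tendsto (fun y : ℝ => |y - x|) (nhdsWithin x (Set.Icc a b)) (nhds 0) := by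
        have hc : Continuous (fun y : ℝ => |y - x|) :=
          (continuous_id.sub continuous_const).abs
        have := (hc.tendsto x).mono_left (nhdsWithin_le_nhds (s := Set.Icc a b))
        simpa using this
      have h2 : ContinuousAt (fun z : ℝ => z ^ (p + 1)) 0 :=
        Real.continuousAt_rpow_const 0 (p + 1) (Or.inr hp1'.le)
      have h3 := (h2.tendsto.comp h1)
      rw [Function.comp_def] at h3
      rw [Real.zero_rpow (ne_of_gt hp1')] at h3
      have := (h3.const_mul (2 * M)).div_const (p + 1)
      simpa using this
    have hsq : Tendsto (fun y => K y - K x) (nhdsWithin x (Set.Icc a b)) (nhds 0) := by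
      apply squeeze_zero_norm' _ h0
      filter_upwards [self_mem_nhdsWithin] with y hy
      exact key x hx y hy
    have : Tendsto K (nhdsWithin x (Set.Icc a b)) (nhds (K x)) := by
      have := hsq.add tendsto_const_nhds (b := K x)
      simpa using this
    exact this
  · intro x hx
    exact absurd hx (by simp [Set.Icc_eq_empty_of_lt hab])

lemma ite_eq_indicator_Iic {x : ℝ} (h : ℝ → ℝ) :
    (fun y => if y ≤ x then h y else 0) = Set.indicator (Set.Iic x) h :=
  funext fun y => by simp [Set.indicator_apply, Set.mem_Iic]

lemma ite_eq_indicator_Ici {y : ℝ} (h : ℝ → ℝ) :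
    (fun x => if y ≤ x then h x else 0) = Set.indicator (Set.Ici y) h :=
  funext fun x => by simp [Set.indicator_apply, Set.mem_Ici]

lemma Iic_inter_Ioc {a b x : ℝ} (hxb : x ≤ b) :
    Set.Iic x ∩ Set.Ioc a b = Set.Ioc a x := by
  ext y
  simp only [Set.mem_inter_iff, Set.mem_Iic, Set.mem_Ioc]
  exact ⟨fun ⟨h1, h2, _⟩ => ⟨h2, h1⟩, fun ⟨h1, h2⟩ => ⟨h2, h1, h2.trans hxb⟩⟩

lemma Ici_inter_Ioc {a b y : ℝ} (hay : a < y) :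
    Set.Ici y ∩ Set.Ioc a b = Set.Icc y b := by
  ext x
  simp only [Set.mem_inter_iff, Set.mem_Ici, Set.mem_Ioc, Set.mem_Icc]
  exact ⟨fun ⟨h1, _, h3⟩ => ⟨h1, h3⟩, fun ⟨h1, h2⟩ => ⟨h1, lt_of_lt_of_le hay h1, h2⟩⟩

lemma ind_integrable {a b x : ℝ} (hxb : x ≤ b) {h : ℝ → ℝ}
    (hh : IntegrableOn h (Set.Ioc a x) volume) :
    Integrable (fun y => if y ≤ x then h y else 0) (volume.restrict (Set.Ioc a b)) := by
  rw [ite_eq_indicator_Iic, integrable_indicator_iff measurableSet_Iic, IntegrableOn,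
    Measure.restrict_restrict measurableSet_Iic, Iic_inter_Ioc hxb]
  exact hh

lemma ind_integral_left {a b x : ℝ} (hxb : x ≤ b) (h : ℝ → ℝ) :
    ∫ y in Set.Ioc a b, (if y ≤ x then h y else 0) = ∫ y in Set.Ioc a x, h y := by
  rw [ite_eq_indicator_Iic, MeasureTheory.integral_indicator measurableSet_Iic,
    Measure.restrict_restrict measurableSet_Iic, Iic_inter_Ioc hxb]

lemma ind_integral_right {a b y : ℝ} (hay : a < y) (h : ℝ → ℝ) :
    ∫ x in Set.Ioc a b, (if y ≤ x then h x else 0) = ∫ x in Set.Ioc y b, h x := by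
  rw [ite_eq_indicator_Ici, MeasureTheory.integral_indicator measurableSet_Ici,
    Measure.restrict_restrict measurableSet_Ici, Ici_inter_Ioc hay,
    ← integral_Icc_eq_integral_Ioc]

lemma triangle_swap {a b : ℝ} {F : ℝ → ℝ → ℝ}
    (hint : Integrable (fun z : ℝ × ℝ => if z.2 ≤ z.1 then F z.1 z.2 else 0)
      ((volume.restrict (Set.Ioc a b)).prod (volume.restrict (Set.Ioc a b)))) :
    ∫ x in Set.Ioc a b, (∫ y in Set.Ioc a x, F x y) =
      ∫ y in Set.Ioc a b, (∫ x in Set.Ioc y b, F x y) := by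
  have hswap := MeasureTheory.integral_integral_swap
    (f := fun x y => if y ≤ x then F x y else 0) hint
  calc ∫ x in Set.Ioc a b, (∫ y in Set.Ioc a x, F x y)
      = ∫ x in Set.Ioc a b, ∫ y in Set.Ioc a b, (if y ≤ x then F x y else 0) := by
        refine setIntegral_congr_fun measurableSet_Ioc (fun x hx => ?_)
        rw [ind_integral_left hx.2]
    _ = ∫ y in Set.Ioc a b, ∫ x in Set.Ioc a b, (if y ≤ x then F x y else 0) := hswap
    _ = ∫ y in Set.Ioc a b, (∫ x in Set.Ioc y b, F x y) := by
        refine setIntegral_congr_fun measurableSet_Ioc (fun y hy => ?_)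
        rw [ind_integral_right hy.1]

lemma measurable_rpow_const {p : ℝ} : Measurable fun x : ℝ => x ^ p := by
  have hdef : (fun x : ℝ => x ^ p) = fun x =>
      if x = 0 then (if p = 0 then 1 else 0)
      else Real.exp (Real.log x * p) * (if x < 0 then Real.cos (p * Real.pi) else 1) := by
    funext x
    rcases lt_trichotomy x 0 with hx | hx | hx
    · rw [Real.rpow_def_of_neg hx]
      simp [ne_of_lt hx, hx, mul_comm]
    · subst hx
      by_cases hp : p = 0
      · simp [hp, Real.rpow_zero]
      · simp [hp, Real.zero_rpow hp]
    · rw [Real.rpow_def_of_pos hx]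
      simp [ne_of_gt hx, not_lt.mpr hx.le]
  rw [hdef]
  refine Measurable.ite (measurableSet_eq) measurable_const ?_
  exact ((Real.measurable_log.mul measurable_const).exp).mul
    (Measurable.ite (measurableSet_lt measurable_id measurable_const) measurable_const measurable_const)

lemma kernel_integrable {a b p q M : ℝ} (hab : a ≤ b) (hp : -1 < p) (hp0 : p ≤ 0)
    (hq : -1 < q) (hq0 : q ≤ 0) {u v : ℝ → ℝ} (hu : Continuous u) (hv : Continuous v)
    (hMu : ∀ s ∈ Set.Icc a b, |u s| ≤ M) (hMv : ∀ s ∈ Set.Icc a b, |v s| ≤ M) :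
    Integrable (fun z : ℝ × ℝ =>
        if z.2 ≤ z.1 then (b - z.1) ^ p * v z.1 * ((z.1 - z.2) ^ q * u z.2) else 0)
      ((volume.restrict (Set.Ioc a b)).prod (volume.restrict (Set.Ioc a b))) := by
  have hq1' : (0:ℝ) < q + 1 := by linarith
  have hM0 : 0 ≤ M := le_trans (abs_nonneg _) (hMu a ⟨le_refl a, hab⟩)
  have hGm : Measurable (fun z : ℝ × ℝ =>
      if z.2 ≤ z.1 then (b - z.1) ^ p * v z.1 * ((z.1 - z.2) ^ q * u z.2) else 0) := by
    refine Measurable.ite (measurableSet_le measurable_snd measurable_fst) ?_ measurable_const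
    exact (((measurable_rpow_const.comp (measurable_const.sub measurable_fst))).mul
        (hv.measurable.comp measurable_fst)).mul
      (((measurable_rpow_const.comp (measurable_fst.sub measurable_snd))).mul
        (hu.measurable.comp measurable_snd))
  have hmeas := hGm.aestronglyMeasurable
    (μ := (volume.restrict (Set.Ioc a b)).prod (volume.restrict (Set.Ioc a b)))
  rw [MeasureTheory.integrable_prod_iff hmeas]
  constructor
  · filter_upwards [ae_restrict_mem measurableSet_Ioc] with x hx
    apply ind_integrable hx.2
    have h1 : IntegrableOn (fun y => (x - y) ^ q * u y) (Set.Ioc a x) volume := by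
      rw [← intervalIntegrable_iff_integrableOn_Ioc_of_le hx.1.le]
      exact (II_ker hq a x x).mul_continuousOn hu.continuousOn
    exact h1.const_mul ((b - x) ^ p * v x)
  · have hmajor : IntegrableOn (fun x => (b - x) ^ p * (M * M * ((b - a) ^ (q + 1) / (q + 1))))
        (Set.Ioc a b) volume := by
      rw [← intervalIntegrable_iff_integrableOn_Ioc_of_le hab]
      exact (II_ker hp a b b).mul_const _
    apply Integrable.mono' hmajor (hmeas.norm.integral_prod_right')
    filter_upwards [ae_restrict_mem measurableSet_Ioc] with x hx
    have hbx : 0 ≤ (b - x) ^ p := Real.rpow_nonneg (by linarith [hx.2]) p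
    have step1 : (fun y => ‖if y ≤ x then (b - x) ^ p * v x * ((x - y) ^ q * u y) else 0‖)
        = fun y => if y ≤ x then ‖(b - x) ^ p * v x * ((x - y) ^ q * u y)‖ else 0 := by
      funext y
      by_cases h : y ≤ x <;> simp [h]
    rw [Real.norm_eq_abs, abs_of_nonneg (integral_nonneg (fun y => norm_nonneg _)), step1,
      ind_integral_left hx.2]
    have hInt1 : IntegrableOn (fun y => ‖(b - x) ^ p * v x * ((x - y) ^ q * u y)‖)
        (Set.Ioc a x) volume := by
      have h1 : IntegrableOn (fun y => (x - y) ^ q * u y) (Set.Ioc a x) volume := by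
        rw [← intervalIntegrable_iff_integrableOn_Ioc_of_le hx.1.le]
        exact (II_ker hq a x x).mul_continuousOn hu.continuousOn
      exact (h1.const_mul ((b - x) ^ p * v x)).norm
    have hInt2 : IntegrableOn (fun y => (b - x) ^ p * M * M * (x - y) ^ q)
        (Set.Ioc a x) volume := by
      rw [← intervalIntegrable_iff_integrableOn_Ioc_of_le hx.1.le]
      exact (II_ker hq a x x).const_mul _
    have hmono : ∫ y in Set.Ioc a x, ‖(b - x) ^ p * v x * ((x - y) ^ q * u y)‖
        ≤ ∫ y in Set.Ioc a x, (b - x) ^ p * M * M * (x - y) ^ q := by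
      refine setIntegral_mono_on hInt1 hInt2 measurableSet_Ioc (fun y hy => ?_)
      have hxy : 0 ≤ (x - y) ^ q := Real.rpow_nonneg (by linarith [hy.2]) q
      have hyIcc : y ∈ Set.Icc a b := ⟨hy.1.le, le_trans hy.2 hx.2⟩
      have hxIcc : x ∈ Set.Icc a b := ⟨le_trans hy.1.le hy.2, hx.2⟩
      calc ‖(b - x) ^ p * v x * ((x - y) ^ q * u y)‖
          = (b - x) ^ p * |v x| * ((x - y) ^ q * |u y|) := by
            rw [Real.norm_eq_abs, abs_mul, abs_mul, abs_mul,
              abs_of_nonneg hbx, abs_of_nonneg hxy]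
        _ ≤ (b - x) ^ p * M * ((x - y) ^ q * M) := by
            apply mul_le_mul
            · exact mul_le_mul_of_nonneg_left (hMv x hxIcc) hbx
            · exact mul_le_mul_of_nonneg_left (hMu y hyIcc) hxy
            · positivity
            · positivity
        _ = (b - x) ^ p * M * M * (x - y) ^ q := by ring
    refine le_trans hmono ?_
    have hval : ∫ y in Set.Ioc a x, (b - x) ^ p * M * M * (x - y) ^ q
        = (b - x) ^ p * M * M * ((x - a) ^ (q + 1) / (q + 1)) := by
      rw [← intervalIntegral.integral_of_le hx.1.le, intervalIntegral.integral_const_mul,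
        int_ker hq hx.1.le]
    rw [hval]
    have : (x - a) ^ (q + 1) ≤ (b - a) ^ (q + 1) :=
      Real.rpow_le_rpow (by linarith [hx.1]) (by linarith [hx.2]) hq1'.le
    calc (b - x) ^ p * M * M * ((x - a) ^ (q + 1) / (q + 1))
        ≤ (b - x) ^ p * M * M * ((b - a) ^ (q + 1) / (q + 1)) := by
          apply mul_le_mul_of_nonneg_left (by gcongr) (by positivity)
      _ = (b - x) ^ p * (M * M * ((b - a) ^ (q + 1) / (q + 1))) := by ring

lemma kernel_fubini {a b p q : ℝ} (hab : a ≤ b) (hp : -1 < p) (hp0 : p ≤ 0)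
    (hq : -1 < q) (hq0 : q ≤ 0) {u v : ℝ → ℝ} (hu : Continuous u) (hv : Continuous v) :
    ∫ x in a..b, ((b - x) ^ p * v x * ∫ y in a..x, (x - y) ^ q * u y)
      = ∫ y in a..b, (u y * ∫ x in y..b, (b - x) ^ p * v x * (x - y) ^ q) := by
  obtain ⟨Mu, hMu⟩ := (isCompact_Icc (a := a) (b := b)).exists_bound_of_continuousOn
    hu.continuousOn
  obtain ⟨Mv, hMv⟩ := (isCompact_Icc (a := a) (b := b)).exists_bound_of_continuousOn
    hv.continuousOn
  set M := max Mu Mv with hM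
  have hMu' : ∀ s ∈ Set.Icc a b, |u s| ≤ M := fun s hs => le_trans (hMu s hs) (le_max_left _ _)
  have hMv' : ∀ s ∈ Set.Icc a b, |v s| ≤ M := fun s hs => le_trans (hMv s hs) (le_max_right _ _)
  have hint := kernel_integrable hab hp hp0 hq hq0 hu hv hMu' hMv'
  have hswap := triangle_swap (F := fun x y => (b - x) ^ p * v x * ((x - y) ^ q * u y)) hint
  calc ∫ x in a..b, ((b - x) ^ p * v x * ∫ y in a..x, (x - y) ^ q * u y)
      = ∫ x in Set.Ioc a b, (∫ y in Set.Ioc a x, (b - x) ^ p * v x * ((x - y) ^ q * u y)) := by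
        rw [intervalIntegral.integral_of_le hab]
        refine setIntegral_congr_fun measurableSet_Ioc (fun x hx => ?_)
        rw [← intervalIntegral.integral_of_le hx.1.le, intervalIntegral.integral_const_mul]
    _ = ∫ y in Set.Ioc a b, (∫ x in Set.Ioc y b, (b - x) ^ p * v x * ((x - y) ^ q * u y)) :=
        hswap
    _ = ∫ y in a..b, (u y * ∫ x in y..b, (b - x) ^ p * v x * (x - y) ^ q) := by
        rw [intervalIntegral.integral_of_le hab]
        refine setIntegral_congr_fun measurableSet_Ioc (fun y hy => ?_)
        rw [← intervalIntegral.integral_of_le hy.2]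
        rw [show (fun x => (b - x) ^ p * v x * ((x - y) ^ q * u y))
            = fun x => u y * ((b - x) ^ p * v x * (x - y) ^ q) from funext fun x => by ring]
        rw [intervalIntegral.integral_const_mul]

lemma semigroup_ker {a b p q : ℝ} (hab : a ≤ b) (hp : -1 < p) (hp0 : p ≤ 0)
    (hq : -1 < q) (hq0 : q ≤ 0) (hpq : p + q = -1) {u : ℝ → ℝ} (hu : Continuous u) :
    ∫ x in a..b, ((b - x) ^ p * ∫ y in a..x, (x - y) ^ q * u y)
      = (∫ z in (0:ℝ)..1, (1 - z) ^ p * z ^ q) * ∫ y in a..b, u y := by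
  have h := kernel_fubini hab hp hp0 hq hq0 hu continuous_const (v := fun _ => (1:ℝ))
  simp only [mul_one] at h
  rw [h, intervalIntegral.integral_of_le hab, intervalIntegral.integral_of_le hab,
    integral_Ioc_eq_integral_Ioo, integral_Ioc_eq_integral_Ioo (f := u), ← MeasureTheory.integral_const_mul]
  refine setIntegral_congr_fun measurableSet_Ioo (fun y hy => ?_)
  rw [kernelBeta hpq hy.2]
  ring

lemma zero_of_integral_zero {a b : ℝ} {w : ℝ → ℝ} (hw : ContinuousOn w (Set.Icc a b))
    (h : ∀ t ∈ Set.Icc a b, ∫ s in a..t, w s = 0) :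
    ∀ t ∈ Set.Ioo a b, w t = 0 := by
  intro t ht
  have hmem : Set.Icc a b ∈ nhds t := Icc_mem_nhds ht.1 ht.2
  have hca : ContinuousAt w t := hw.continuousAt hmem
  have hmeas : StronglyMeasurableAtFilter w (nhds t) :=
    ⟨Set.Icc a b, hmem, hw.aestronglyMeasurable measurableSet_Icc⟩
  have hsub : Set.uIcc a t ⊆ Set.Icc a b := by
    rw [Set.uIcc_of_le (le_of_lt ht.1)]
    exact Set.Icc_subset_Icc le_rfl ht.2.le
  have hint : IntervalIntegrable w volume a t := (hw.mono hsub).intervalIntegrable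
  have hd : HasDerivAt (fun x => ∫ s in a..x, w s) (w t) t :=
    intervalIntegral.integral_hasDerivAt_right hint hmeas hca
  have hev : (fun x => ∫ s in a..x, w s) =ᶠ[nhds t] (fun _ => (0:ℝ)) := by
    filter_upwards [hmem] with x hx
    exact h x hx
  have hd0 : HasDerivAt (fun _ : ℝ => (0:ℝ)) (w t) t := by
    exact (Filter.EventuallyEq.hasDerivAt_iff hev).mp hd
  have := hd0.unique (hasDerivAt_const t 0)
  linarith [this]

lemma left_rep {a b α : ℝ} (hab : a < b) (hα0 : 0 < α) (hα1 : α < 1) {g φ : ℝ → ℝ}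
    (hg : Continuous g) (hφ : Continuous φ)
    (hG : ∀ t ∈ Set.Icc a b, (∫ τ in a..t, (t - τ) ^ (-α) * g τ)
      = Real.Gamma (1 - α) * ∫ s in a..t, φ s) :
    ∀ t ∈ Set.Ioo a b, g t = (1 / Real.Gamma α) * ∫ s in a..t, (t - s) ^ (α - 1) * φ s := by
  have hΓa : 0 < Real.Gamma α := Real.Gamma_pos_of_pos hα0
  have hΓc : 0 < Real.Gamma (1 - α) := Real.Gamma_pos_of_pos (by linarith)
  have hp1 : (-1:ℝ) < -α := by linarith
  have hp0 : (-α:ℝ) ≤ 0 := by linarith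
  have hq1 : (-1:ℝ) < α - 1 := by linarith
  have hq0 : (α - 1:ℝ) ≤ 0 := by linarith
  set K : ℝ → ℝ := fun x => ∫ s in a..x, (x - s) ^ (α - 1) * φ s with hKdef
  have hKcont : ContinuousOn K (Set.Icc a b) := abel_continuousOn hq1 hq0 hφ
  -- Beta values
  have hB1 : (∫ z in (0:ℝ)..1, (1 - z) ^ (-α) * z ^ (α - 1))
      = Real.Gamma α * Real.Gamma (1 - α) := by
    rw [← realBeta hα0 hα1]
    exact intervalIntegral.integral_congr (fun z _ => by ring)
  have hB2 : (∫ z in (0:ℝ)..1, (1 - z) ^ (α - 1) * z ^ (-α))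
      = Real.Gamma α * Real.Gamma (1 - α) := by
    have := realBeta (α := 1 - α) (by linarith) (by linarith)
    rw [show (1:ℝ) - α - 1 = -α by ring, show (-(1 - α):ℝ) = α - 1 by ring,
      show (1:ℝ) - (1 - α) = α by ring] at this
    rw [mul_comm (Real.Gamma α), ← this]
    exact intervalIntegral.integral_congr (fun z _ => by ring)
  -- claim 1 : iterated kernel integral of φ
  have claim1 : ∀ t ∈ Set.Icc a b, (∫ s in a..t, (t - s) ^ (-α) * K s)
      = Real.Gamma α * Real.Gamma (1 - α) * ∫ s in a..t, φ s := by
    intro t ht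
    have := semigroup_ker (a := a) (b := t) ht.1 hp1 hp0 hq1 hq0 (by ring) hφ
    rw [hB1] at this
    exact this
  -- claim 2 : Abel transform of u vanishes
  have claim2 : ∀ t ∈ Set.Icc a b,
      (∫ s in a..t, (t - s) ^ (-α) * (g s - (1 / Real.Gamma α) * K s)) = 0 := by
    intro t ht
    have hIg : IntervalIntegrable (fun s => (t - s) ^ (-α) * g s) volume a t :=
      (II_ker hp1 a t t).mul_continuousOn hg.continuousOn
    have hIK : IntervalIntegrable (fun s => (t - s) ^ (-α) * K s) volume a t := by
      apply (II_ker hp1 a t t).mul_continuousOn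
      apply hKcont.mono
      rw [Set.uIcc_of_le ht.1]
      exact Set.Icc_subset_Icc le_rfl ht.2
    have hsplit : (∫ s in a..t, (t - s) ^ (-α) * (g s - (1 / Real.Gamma α) * K s))
        = (∫ s in a..t, (t - s) ^ (-α) * g s)
          - (1 / Real.Gamma α) * ∫ s in a..t, (t - s) ^ (-α) * K s := by
      rw [← intervalIntegral.integral_const_mul, ← intervalIntegral.integral_sub hIg
        (hIK.const_mul _)]
      exact intervalIntegral.integral_congr (fun s _ => by ring)
    rw [hsplit, hG t ht, claim1 t ht]
    field_simp
    ring
  -- claim 3 : the primitive of u vanishes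
  have hucont : ContinuousOn (fun s => g s - (1 / Real.Gamma α) * K s) (Set.Icc a b) :=
    hg.continuousOn.sub (continuousOn_const.mul hKcont)
  set cl : ℝ → ℝ := fun x => max a (min b x) with hcl
  have hclcont : Continuous cl := (continuous_const.max (continuous_const.min continuous_id))
  have hclmem : ∀ x, cl x ∈ Set.Icc a b := fun x =>
    ⟨le_max_left _ _, max_le (by linarith) (min_le_left _ _)⟩
  have hcleq : ∀ x ∈ Set.Icc a b, cl x = x := fun x hx => by
    rw [hcl]; simp only [min_def, max_def]
    rcases hx with ⟨h1, h2⟩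
    split_ifs <;> linarith
  set ub : ℝ → ℝ := fun s => g (cl s) - (1 / Real.Gamma α) * K (cl s) with hub
  have hubcont : Continuous ub := by
    have : ub = (fun s => g s - (1 / Real.Gamma α) * K s) ∘ cl := rfl
    rw [this]
    exact (hucont.comp_continuous hclcont hclmem)
  have hubeq : ∀ x ∈ Set.Icc a b, ub x = g x - (1 / Real.Gamma α) * K x := fun x hx => by
    rw [hub]; simp only [hcleq x hx]
  have claim3 : ∀ t ∈ Set.Icc a b,
      (∫ s in a..t, (g s - (1 / Real.Gamma α) * K s)) = 0 := by
    intro t ht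
    have hsg := semigroup_ker (a := a) (b := t) ht.1 hq1 hq0 hp1 hp0 (by ring) hubcont
    rw [hB2] at hsg
    have hLHS : (∫ x in a..t, ((t - x) ^ (α - 1) * ∫ y in a..x, (x - y) ^ (-α) * ub y)) = 0 := by
      have : ∀ x ∈ Set.uIcc a t,
          ((t - x) ^ (α - 1) * ∫ y in a..x, (x - y) ^ (-α) * ub y) = 0 := by
        intro x hx
        rw [Set.uIcc_of_le ht.1] at hx
        have hxIcc : x ∈ Set.Icc a b := ⟨hx.1, le_trans hx.2 ht.2⟩
        have : (∫ y in a..x, (x - y) ^ (-α) * ub y)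
            = ∫ y in a..x, (x - y) ^ (-α) * (g y - (1 / Real.Gamma α) * K y) := by
          refine intervalIntegral.integral_congr (fun y hy => ?_)
          rw [Set.uIcc_of_le hx.1] at hy
          rw [hubeq y ⟨hy.1, le_trans hy.2 hxIcc.2⟩]
        rw [this, claim2 x hxIcc, mul_zero]
      rw [intervalIntegral.integral_congr this]
      simp
    rw [hLHS] at hsg
    have hpos : 0 < Real.Gamma α * Real.Gamma (1 - α) := mul_pos hΓa hΓc
    have hint0 : (∫ y in a..t, ub y) = 0 := by
      rcases mul_eq_zero.mp hsg.symm with h | h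
      · exact absurd h (ne_of_gt hpos)
      · exact h
    rw [← hint0]
    refine intervalIntegral.integral_congr (fun s hs => ?_)
    rw [Set.uIcc_of_le ht.1] at hs
    exact (hubeq s ⟨hs.1, le_trans hs.2 ht.2⟩).symm
  -- conclude
  intro t ht
  have := zero_of_integral_zero hucont claim3 t ht
  have : g t = (1 / Real.Gamma α) * K t := by linarith
  exact this

lemma ftc_primitive {a t : ℝ} {G D : ℝ → ℝ} (hat : a ≤ t)
    (hd : ∀ x ∈ Set.Icc a t, DifferentiableAt ℝ G x)
    (hD : ∀ x, deriv G x = D x) (hDc : ContinuousOn D (Set.Icc a t)) :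
    G t - G a = ∫ s in a..t, D s := by
  rw [← intervalIntegral.integral_deriv_eq_sub' (f' := D) G (funext hD) ?_ ?_]
  · intro x hx
    rw [Set.uIcc_of_le hat] at hx
    exact hd x hx
  · rwa [Set.uIcc_of_le hat]

noncomputable def clamp (a b : ℝ) : ℝ → ℝ := fun x => max a (min b x)

lemma clamp_continuous (a b : ℝ) : Continuous (clamp a b) :=
  continuous_const.max (continuous_const.min continuous_id)

lemma clamp_mem {a b : ℝ} (hab : a ≤ b) (x : ℝ) : clamp a b x ∈ Set.Icc a b :=
  ⟨le_max_left _ _, max_le hab (min_le_left _ _)⟩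

lemma clamp_eq {a b : ℝ} : ∀ x ∈ Set.Icc a b, clamp a b x = x := fun x hx => by
  unfold clamp
  rcases hx with ⟨h1, h2⟩
  rw [min_eq_right h2, max_eq_right h1]

/-- **Fractional integration by parts.** If `f, g` are continuous on `[a,b]`, the left
Riemann–Liouville fractional derivative of `g` and the right Riemann–Liouville fractional
derivative of `f` (of order `0 < α < 1`) exist and are continuous at every point of `[a,b]`,
then `∫_a^b f(t) ₐD_t^α g(t) dt = ∫_a^b g(t) ₜD_b^α f(t) dt`. -/
theorem fractional_integration_by_parts
    (a b α : ℝ) (hab : a < b) (hα0 : 0 < α) (hα1 : α < 1)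
    (f g : ℝ → ℝ)
    (hf : ContinuousOn f (Set.Icc a b)) (hg : ContinuousOn g (Set.Icc a b))
    (hgex : ∀ t ∈ Set.Icc a b,
      DifferentiableAt ℝ (fun s => ∫ τ in a..s, (s - τ) ^ (-α) * g τ) t)
    (hgcont : ContinuousOn (leftRL a α g) (Set.Icc a b))
    (hfex : ∀ t ∈ Set.Icc a b,
      DifferentiableAt ℝ (fun s => ∫ τ in s..b, (τ - s) ^ (-α) * f τ) t)
    (hfcont : ContinuousOn (rightRL b α f) (Set.Icc a b)) :
    ∫ t in a..b, f t * leftRL a α g t = ∫ t in a..b, g t * rightRL b α f t := by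
  have hab' : a ≤ b := hab.le
  set c := Real.Gamma (1 - α) with hcdef
  have hc : 0 < c := Real.Gamma_pos_of_pos (by linarith)
  have hΓa : 0 < Real.Gamma α := Real.Gamma_pos_of_pos hα0
  have hΓane : Real.Gamma α ≠ 0 := ne_of_gt hΓa
  set φ := leftRL a α g with hφdef
  set ψ := rightRL b α f with hψdef
  set G : ℝ → ℝ := fun s => ∫ τ in a..s, (s - τ) ^ (-α) * g τ with hGdef
  have hderivG : ∀ t, deriv G t = c * φ t := by
    intro t
    have h : φ t = (1 / c) * deriv G t := rfl
    rw [h]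
    field_simp
  have hq1 : (-1:ℝ) < α - 1 := by linarith
  have hq0 : (α - 1:ℝ) ≤ 0 := by linarith
  -- clamped versions of g and φ
  set gb : ℝ → ℝ := fun x => g (clamp a b x) with hgbdef
  have hgbc : Continuous gb := hg.comp_continuous (clamp_continuous a b) (clamp_mem hab')
  have hgbeq : ∀ x ∈ Set.Icc a b, gb x = g x := fun x hx => congrArg g (clamp_eq x hx)
  set φb : ℝ → ℝ := fun x => φ (clamp a b x) with hφbdef
  have hφbc : Continuous φb := hgcont.comp_continuous (clamp_continuous a b) (clamp_mem hab')
  have hφbeq : ∀ x ∈ Set.Icc a b, φb x = φ x := fun x hx => congrArg φ (clamp_eq x hx)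
  -- FTC identity for G
  have hGrep : ∀ t ∈ Set.Icc a b, (∫ τ in a..t, (t - τ) ^ (-α) * gb τ)
      = c * ∫ s in a..t, φb s := by
    intro t ht
    have h1 : (∫ τ in a..t, (t - τ) ^ (-α) * gb τ) = G t := by
      refine intervalIntegral.integral_congr (fun τ hτ => ?_)
      rw [Set.uIcc_of_le ht.1] at hτ
      rw [hgbeq τ ⟨hτ.1, le_trans hτ.2 ht.2⟩]
    have h2 : G t - G a = ∫ s in a..t, c * φ s :=
      ftc_primitive ht.1 (fun x hx => hgex x ⟨hx.1, le_trans hx.2 ht.2⟩) hderivG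
        (continuousOn_const.mul (hgcont.mono (Set.Icc_subset_Icc le_rfl ht.2)))
    have hGa : G a = 0 := by
      rw [hGdef]
      exact intervalIntegral.integral_same
    rw [h1, show G t = G t - G a by rw [hGa]; ring, h2,
      intervalIntegral.integral_const_mul]
    congr 1
    refine intervalIntegral.integral_congr (fun s hs => ?_)
    rw [Set.uIcc_of_le ht.1] at hs
    exact (hφbeq s ⟨hs.1, le_trans hs.2 ht.2⟩).symm
  have LeftRep := left_rep hab hα0 hα1 hgbc hφbc hGrep
  -- reflection setup for the right derivative
  set F : ℝ → ℝ := fun s => ∫ τ in s..b, (τ - s) ^ (-α) * f τ with hFdef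
  have hderivF : ∀ t, deriv F t = -(c * ψ t) := by
    intro t
    have h : ψ t = (-1 / c) * deriv F t := rfl
    rw [h]
    field_simp
  set G' : ℝ → ℝ := fun x => ∫ σ in a..x, (x - σ) ^ (-α) * f (a + b - σ) with hG'def
  have hrefl : ∀ x, G' x = F (a + b - x) := by
    intro x
    have h1 : G' x = ∫ σ in a..x, (fun τ => (τ - (a + b - x)) ^ (-α) * f τ) (a + b - σ) := by
      refine intervalIntegral.integral_congr (fun σ _ => ?_)
      have : a + b - σ - (a + b - x) = x - σ := by ring
      simp only [this]
    rw [h1, intervalIntegral.integral_comp_sub_left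
      (fun τ => (τ - (a + b - x)) ^ (-α) * f τ) (a + b)]
    have e1 : a + b - a = b := by ring
    rw [e1, hFdef]
  have hFG' : ∀ y, F y = G' (a + b - y) := fun y => by
    rw [hrefl (a + b - y), show a + b - (a + b - y) = y by ring]
  have hG'F : G' = F ∘ (fun x : ℝ => a + b - x) := funext fun x => hrefl x
  have hderivG'2 : ∀ t, deriv G' t = c * ψ (a + b - t) := by
    intro t
    have hmain : deriv G' t = - deriv F (a + b - t) := by
      by_cases hdiff : DifferentiableAt ℝ F (a + b - t)
      · have hr : HasDerivAt (fun x : ℝ => a + b - x) (-1) t := by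
          have := (hasDerivAt_const t (a + b)).sub (hasDerivAt_id' t); rwa [zero_sub] at this
        have hcomp := HasDerivAt.comp t (hdiff.hasDerivAt) hr
        rw [hG'F, hcomp.deriv]
        ring
      · have h1 : ¬ DifferentiableAt ℝ G' t := by
          intro hG'd
          apply hdiff
          have hFdecomp : F = G' ∘ (fun y : ℝ => a + b - y) := funext fun y => hFG' y
          rw [hFdecomp]
          have hrdiff : DifferentiableAt ℝ (fun y : ℝ => a + b - y) (a + b - t) :=
            (differentiable_const (a + b)).differentiableAt.sub differentiable_id.differentiableAt
          have hG'd' : DifferentiableAt ℝ G' ((fun y : ℝ => a + b - y) (a + b - t)) := by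
            rw [show (fun y : ℝ => a + b - y) (a + b - t) = t by simp]
            exact hG'd
          exact DifferentiableAt.comp _ hG'd' hrdiff
        rw [deriv_zero_of_not_differentiableAt h1, deriv_zero_of_not_differentiableAt hdiff,
          neg_zero]
    rw [hmain, hderivF (a + b - t)]
    ring
  -- clamped reflected functions
  set fr : ℝ → ℝ := fun σ => f (clamp a b (a + b - σ)) with hfrdef
  have hrc : Continuous (fun σ : ℝ => clamp a b (a + b - σ)) :=
    (clamp_continuous a b).comp (continuous_const.sub continuous_id)
  have hfrc : Continuous fr := hf.comp_continuous hrc (fun x => clamp_mem hab' _)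
  set ψb : ℝ → ℝ := fun x => ψ (clamp a b x) with hψbdef
  have hψbc : Continuous ψb := hfcont.comp_continuous (clamp_continuous a b) (clamp_mem hab')
  have hψbeq : ∀ x ∈ Set.Icc a b, ψb x = ψ x := fun x hx => congrArg ψ (clamp_eq x hx)
  set ψr : ℝ → ℝ := fun σ => ψ (clamp a b (a + b - σ)) with hψrdef
  have hψrc : Continuous ψr := hfcont.comp_continuous hrc (fun x => clamp_mem hab' _)
  have hmemref : ∀ x ∈ Set.Icc a b, a + b - x ∈ Set.Icc a b := fun x hx =>
    ⟨by linarith [hx.2], by linarith [hx.1]⟩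
  have hfr_eq : ∀ x ∈ Set.Icc a b, fr x = f (a + b - x) := fun x hx =>
    congrArg f (clamp_eq _ (hmemref x hx))
  have hψr_eq : ∀ x ∈ Set.Icc a b, ψr x = ψ (a + b - x) := fun x hx =>
    congrArg ψ (clamp_eq _ (hmemref x hx))
  -- differentiability of G' on Icc
  have hG'diff : ∀ x ∈ Set.Icc a b, DifferentiableAt ℝ G' x := by
    intro x hx
    rw [hG'F]
    have hrdiff : DifferentiableAt ℝ (fun y : ℝ => a + b - y) x :=
      (differentiable_const (a + b)).differentiableAt.sub differentiable_id.differentiableAt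
    exact DifferentiableAt.comp x (hfex _ (hmemref x hx)) hrdiff
  -- FTC identity for G'
  have hGrep' : ∀ t ∈ Set.Icc a b, (∫ τ in a..t, (t - τ) ^ (-α) * fr τ)
      = c * ∫ s in a..t, ψr s := by
    intro t ht
    have h1 : (∫ τ in a..t, (t - τ) ^ (-α) * fr τ) = G' t := by
      refine intervalIntegral.integral_congr (fun τ hτ => ?_)
      rw [Set.uIcc_of_le ht.1] at hτ
      rw [hfr_eq τ ⟨hτ.1, le_trans hτ.2 ht.2⟩]
    have hψcont' : ContinuousOn (fun s => c * ψ (a + b - s)) (Set.Icc a t) := by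
      apply continuousOn_const.mul
      apply hfcont.comp ((continuous_const.sub continuous_id).continuousOn)
      intro x hx
      exact hmemref x ⟨hx.1, le_trans hx.2 ht.2⟩
    have h2 : G' t - G' a = ∫ s in a..t, c * ψ (a + b - s) :=
      ftc_primitive ht.1 (fun x hx => hG'diff x ⟨hx.1, le_trans hx.2 ht.2⟩) hderivG'2 hψcont'
    have hG'a : G' a = 0 := by
      rw [hG'def]
      exact intervalIntegral.integral_same
    rw [h1, show G' t = G' t - G' a by rw [hG'a]; ring, h2,
      intervalIntegral.integral_const_mul]
    congr 1
    refine intervalIntegral.integral_congr (fun s hs => ?_)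
    rw [Set.uIcc_of_le ht.1] at hs
    exact (hψr_eq s ⟨hs.1, le_trans hs.2 ht.2⟩).symm
  have RightRep0 := left_rep hab hα0 hα1 hfrc hψrc hGrep'
  -- reflect back to get the representation of f
  have RightRep : ∀ y ∈ Set.Ioo a b, f y
      = (1 / Real.Gamma α) * ∫ x in y..b, (x - y) ^ (α - 1) * ψb x := by
    intro y hy
    have hy' : a + b - y ∈ Set.Ioo a b := ⟨by linarith [hy.2], by linarith [hy.1]⟩
    have h0 := RightRep0 (a + b - y) hy'
    have hfr0 : fr (a + b - y) = f y := by
      rw [hfrdef]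
      exact congrArg f (by
        rw [show a + b - (a + b - y) = y by ring]
        exact clamp_eq y ⟨hy.1.le, hy.2.le⟩)
    rw [hfr0] at h0
    rw [h0]
    congr 1
    have h1 : (∫ s in a..(a + b - y), ((a + b - y) - s) ^ (α - 1) * ψr s)
        = ∫ s in a..(a + b - y),
            (fun x => (x - y) ^ (α - 1) * ψb x) (a + b - s) := by
      refine intervalIntegral.integral_congr (fun s _ => ?_)
      simp only [hψbdef, hψrdef, show a + b - (a + b - s) = s from by ring,
        show a + b - s - y = a + b - y - s from by ring]
    rw [h1, intervalIntegral.integral_comp_sub_left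
      (fun x => (x - y) ^ (α - 1) * ψb x) (a + b)]
    rw [show a + b - (a + b - y) = y by ring, show a + b - a = b by ring]
  -- final computation
  have hmemIoo : ∀ t ∈ Set.Ioo a b, t ∈ Set.Icc a b := fun t ht => ⟨ht.1.le, ht.2.le⟩
  rw [intervalIntegral.integral_of_le hab', intervalIntegral.integral_of_le hab',
    MeasureTheory.integral_Ioc_eq_integral_Ioo, MeasureTheory.integral_Ioc_eq_integral_Ioo]
  have step1 : ∫ t in Set.Ioo a b, g t * ψ t
      = ∫ t in Set.Ioo a b, (1 / Real.Gamma α)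
          * (ψb t * ∫ s in a..t, (t - s) ^ (α - 1) * φb s) := by
    refine setIntegral_congr_fun measurableSet_Ioo (fun t ht => ?_)
    rw [← hgbeq t (hmemIoo t ht), ← hψbeq t (hmemIoo t ht), LeftRep t ht]
    ring
  have step4 : ∫ t in Set.Ioo a b, (ψb t * ∫ s in a..t, (t - s) ^ (α - 1) * φb s)
      = ∫ y in Set.Ioo a b, (φb y * ∫ x in y..b, (x - y) ^ (α - 1) * ψb x) := by
    rw [← MeasureTheory.integral_Ioc_eq_integral_Ioo,
      ← MeasureTheory.integral_Ioc_eq_integral_Ioo,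
      ← intervalIntegral.integral_of_le hab', ← intervalIntegral.integral_of_le hab']
    have hfub := kernel_fubini hab' (by norm_num : (-1:ℝ) < 0) le_rfl hq1 hq0 hφbc hψbc
    calc ∫ t in a..b, (ψb t * ∫ s in a..t, (t - s) ^ (α - 1) * φb s)
        = ∫ t in a..b, ((b - t) ^ (0:ℝ) * ψb t * ∫ s in a..t, (t - s) ^ (α - 1) * φb s) := by
          refine intervalIntegral.integral_congr (fun t _ => ?_)
          rw [Real.rpow_zero, one_mul]
      _ = ∫ y in a..b, (φb y * ∫ x in y..b, (b - x) ^ (0:ℝ) * ψb x * (x - y) ^ (α - 1)) :=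
          hfub
      _ = ∫ y in a..b, (φb y * ∫ x in y..b, (x - y) ^ (α - 1) * ψb x) := by
          refine intervalIntegral.integral_congr (fun y _ => ?_)
          congr 1
          refine intervalIntegral.integral_congr (fun x _ => ?_)
          rw [Real.rpow_zero]
          ring
  have step5 : ∫ y in Set.Ioo a b, (φb y * ∫ x in y..b, (x - y) ^ (α - 1) * ψb x)
      = ∫ y in Set.Ioo a b, Real.Gamma α * (f y * φ y) := by
    refine setIntegral_congr_fun measurableSet_Ioo (fun y hy => ?_)
    have h0 := RightRep y hy
    have hinner : (∫ x in y..b, (x - y) ^ (α - 1) * ψb x) = Real.Gamma α * f y := by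
      rw [h0]
      field_simp
    rw [hinner, hφbeq y (hmemIoo y hy)]
    ring
  rw [step1, MeasureTheory.integral_const_mul, step4, step5,
    MeasureTheory.integral_const_mul]
  rw [← mul_assoc]
  rw [one_div, inv_mul_cancel₀ hΓane, one_mul]
end

section
/- Let a < b be real numbers, 0 < α < 1, and let f : [a,b] → ℝ be continuously differentiable with f(a) ≠ 0. Then the left Riemann–Liouville fractional derivative ₐD_t^α f(t) blows up at the left endpoint: |ₐD_t^α f(t)| → ∞ as t → a⁺. Consequently, if f is continuously differentiable and t ↦ ₐD_t^α f(t) extends to a continuous function on all of [a,b], then f(a) = 0. -/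
open MeasureTheory intervalIntegral Set Filter Topology

namespace LeftRLAux

/-- `x ↦ x ^ c` (real rpow) is measurable. -/
lemma measurable_rpow_const (c : ℝ) : Measurable fun x : ℝ => x ^ c := by
  have h : (fun x : ℝ => x ^ c) = fun x : ℝ =>
      if x = 0 then (0 : ℝ) ^ c
      else Real.exp (Real.log x * c) * (if x < 0 then Real.cos (c * Real.pi) else 1) := by
    funext x
    rcases lt_trichotomy x 0 with hx | hx | hx
    · rw [if_neg hx.ne, if_pos hx, Real.rpow_def_of_neg hx]
    · rw [hx, if_pos rfl]
    · rw [if_neg hx.ne', if_neg (not_lt.2 hx.le), mul_one, Real.rpow_def_of_pos hx]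
  rw [h]
  have h0 : MeasurableSet {x : ℝ | x = 0} := by
    rw [Set.setOf_eq_eq_singleton]; exact MeasurableSet.singleton 0
  have hneg : MeasurableSet {x : ℝ | x < 0} := measurableSet_Iio
  exact Measurable.ite h0 measurable_const
    (((Real.measurable_log.mul measurable_const).exp).mul
      (Measurable.ite hneg measurable_const measurable_const))

section Main

variable {a b α : ℝ}

/-- The kernel `τ ↦ (s - τ) ^ (-α)` is interval integrable on `c..s`. -/
lemma ker_intble (hα0 : 0 < α) (hα1 : α < 1) (c s : ℝ) :
    IntervalIntegrable (fun τ => (s - τ) ^ (-α)) volume c s := by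
  have h : IntervalIntegrable (fun x : ℝ => x ^ (-α)) volume 0 (s - c) :=
    intervalIntegrable_rpow' (by linarith)
  have h2 := (h.comp_sub_left s).symm
  simpa using h2

/-- Value of the kernel integral. -/
lemma ker_integral (hα1 : α < 1) (c s : ℝ) :
    ∫ τ in c..s, (s - τ) ^ (-α) = (s - c) ^ (1 - α) / (1 - α) := by
  have h1 : (∫ τ in c..s, (s - τ) ^ (-α)) = ∫ x in (s - s)..(s - c), x ^ (-α) :=
    intervalIntegral.integral_comp_sub_left (fun x : ℝ => x ^ (-α)) s
  rw [h1, sub_self]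
  rw [integral_rpow (Or.inl (by linarith : (-1 : ℝ) < -α))]
  rw [Real.zero_rpow (by intro hcon; apply absurd hcon; intro h; linarith [h] : -α + 1 ≠ 0)]
  rw [show -α + 1 = 1 - α by ring]
  rw [sub_zero]

/-- Bound for the integral of the norm. -/
lemma norm_int_le (hα0 : 0 < α) (hα1 : α < 1) {φ : ℝ → ℝ} (hφc : Continuous φ)
    {M : ℝ} (hM : ∀ x, |φ x| ≤ M) {s : ℝ} (hs : a ≤ s) :
    ∫ τ in a..s, ‖(s - τ) ^ (-α) * φ τ‖ ≤ M * ((s - a) ^ (1 - α) / (1 - α)) := by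
  have hint : IntervalIntegrable (fun τ => (s - τ) ^ (-α) * φ τ) volume a s :=
    (ker_intble hα0 hα1 a s).mul_continuousOn hφc.continuousOn
  have h2 : ∫ τ in a..s, M * (s - τ) ^ (-α) = M * ((s - a) ^ (1 - α) / (1 - α)) := by
    rw [intervalIntegral.integral_const_mul, ker_integral hα1]
  rw [← h2]
  apply intervalIntegral.integral_mono_on hs hint.norm ((ker_intble hα0 hα1 a s).const_mul M)
  intro τ hτ
  have h3 : (0:ℝ) ≤ (s - τ) ^ (-α) := Real.rpow_nonneg (by linarith [hτ.2]) _
  rw [Real.norm_eq_abs, abs_mul, abs_of_nonneg h3]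
  calc (s - τ) ^ (-α) * |φ τ| ≤ (s - τ) ^ (-α) * M :=
        mul_le_mul_of_nonneg_left (hM τ) h3
    _ = M * (s - τ) ^ (-α) := mul_comm _ _

lemma kbound (hα0 : 0 < α) (hα1 : α < 1) {φ : ℝ → ℝ} (hφc : Continuous φ)
    {M : ℝ} (hM : ∀ x, |φ x| ≤ M) {s : ℝ} (hs : a ≤ s) :
    |∫ τ in a..s, (s - τ) ^ (-α) * φ τ| ≤ M * ((s - a) ^ (1 - α) / (1 - α)) := by
  rw [← Real.norm_eq_abs]
  exact (intervalIntegral.norm_integral_le_integral_norm hs).trans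
    (norm_int_le hα0 hα1 hφc hM hs)

/-- Integration by parts identity. -/
lemma I1 (hα0 : 0 < α) (hα1 : α < 1) {f φ : ℝ → ℝ}
    (hfc : ContinuousOn f (Icc a b))
    (hd : ∀ x ∈ Ioo a b, HasDerivAt f (φ x) x) (hφc : Continuous φ)
    {t : ℝ} (ht : t ∈ Ioc a b) :
    ∫ τ in a..t, (t - τ) ^ (-α) * f τ
      = f a * ((t - a) ^ (1 - α) / (1 - α))
        + ∫ τ in a..t, φ τ * ((t - τ) ^ (1 - α) / (1 - α)) := by
  have h1α : (0:ℝ) < 1 - α := by linarith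
  set v : ℝ → ℝ := fun τ => -((t - τ) ^ (1 - α) / (1 - α)) with hv
  have hvc : Continuous v := by
    have h : Continuous fun τ : ℝ => (t - τ) ^ (1 - α) :=
      (Real.continuous_rpow_const (by linarith)).comp (continuous_const.sub continuous_id)
    exact (h.div_const _).neg
  have hvd : ∀ x ∈ Ioo a t, HasDerivAt v ((t - x) ^ (-α)) x := by
    intro x hx
    have hbase : HasDerivAt (fun τ : ℝ => t - τ) (-1) x := (hasDerivAt_id x).const_sub t
    have hne : t - x ≠ 0 := by have := hx.2; intro hcon; nlinarith [sub_eq_zero.mp hcon]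
    have h2 : HasDerivAt (fun τ : ℝ => (t - τ) ^ (1 - α))
        ((-1) * (1 - α) * (t - x) ^ (1 - α - 1)) x := hbase.rpow_const (Or.inl hne)
    have h3 := (h2.div_const (1 - α)).neg
    convert h3 using 1
    case e'_4 => rfl
    case e'_5 => rfl
    case e'_8 => rfl
    rw [show (1:ℝ) - α - 1 = -α by ring]
    field_simp
  have hmin : min a t = a := min_eq_left ht.1.le
  have hmax : max a t = t := max_eq_right ht.1.le
  have key := intervalIntegral.integral_mul_deriv_eq_deriv_mul_of_hasDeriv_right
    (u := f) (v := v) (u' := φ) (v' := fun τ => (t - τ) ^ (-α))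
    (hfc.mono (by rw [uIcc_of_le ht.1.le]; exact Icc_subset_Icc le_rfl ht.2))
    hvc.continuousOn
    (fun x hx => by
      have hx' : x ∈ Ioo a t := by rwa [hmin, hmax] at hx
      exact (hd x ⟨hx'.1, lt_of_lt_of_le hx'.2 ht.2⟩).hasDerivWithinAt)
    (fun x hx => by
      have hx' : x ∈ Ioo a t := by rwa [hmin, hmax] at hx
      exact (hvd x hx').hasDerivWithinAt)
    (hφc.intervalIntegrable a t)
    (ker_intble hα0 hα1 a t)
  have hgoal : (∫ τ in a..t, (t - τ) ^ (-α) * f τ) = ∫ x in a..t, f x * (t - x) ^ (-α) :=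
    intervalIntegral.integral_congr fun x _ => mul_comm _ _
  have hvt : v t = 0 := by
    simp [hv, sub_self, Real.zero_rpow (by linarith : (1:ℝ) - α ≠ 0)]
  have hneg : (∫ x in a..t, φ x * v x)
      = - ∫ x in a..t, φ x * ((t - x) ^ (1 - α) / (1 - α)) := by
    rw [← intervalIntegral.integral_neg]
    exact intervalIntegral.integral_congr fun x _ => by simp [hv]
  rw [hgoal, key, hvt, hneg]
  simp [hv]

end Main

/-- The (extended) kernel-product function used for Fubini. -/
noncomputable def Psi (α : ℝ) (φ : ℝ → ℝ) (s σ : ℝ) : ℝ := (max (s - σ) 0) ^ (-α) * φ σ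

lemma Psi_zero (hα0 : 0 < α) {φ : ℝ → ℝ} {s σ : ℝ} (h : s ≤ σ) : Psi α φ s σ = 0 := by
  unfold Psi
  rw [max_eq_right (by linarith : s - σ ≤ 0),
    Real.zero_rpow (by intro hcon; nlinarith [neg_eq_zero.mp hcon] : -α ≠ 0), zero_mul]

lemma Psi_eq {α : ℝ} {φ : ℝ → ℝ} {s σ : ℝ} (h : σ ≤ s) :
    Psi α φ s σ = (s - σ) ^ (-α) * φ σ := by
  unfold Psi
  rw [max_eq_left (by linarith : 0 ≤ s - σ)]

lemma Psi_measurable (α : ℝ) {φ : ℝ → ℝ} (hφc : Continuous φ) :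
    Measurable (Function.uncurry (Psi α φ)) := by
  show Measurable fun p : ℝ × ℝ => (max (p.1 - p.2) 0) ^ (-α) * φ p.2
  exact ((measurable_rpow_const (-α)).comp
    ((measurable_fst.sub measurable_snd).max measurable_const)).mul
    (hφc.measurable.comp measurable_snd)

section Main2

variable {a b α : ℝ}

lemma Psi_intOn_lower (hα0 : 0 < α) (hα1 : α < 1) {φ : ℝ → ℝ} (hφc : Continuous φ)
    {s : ℝ} (hs : a ≤ s) : IntegrableOn (fun σ => Psi α φ s σ) (Ioc a s) volume := by
  have hbase : IntegrableOn (fun σ => (s - σ) ^ (-α) * φ σ) (Ioc a s) volume :=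
    (intervalIntegrable_iff_integrableOn_Ioc_of_le hs).mp
      ((ker_intble hα0 hα1 a s).mul_continuousOn hφc.continuousOn)
  exact hbase.congr_fun (fun σ hσ => (Psi_eq hσ.2).symm) measurableSet_Ioc

lemma Psi_intOn_upper (hα0 : 0 < α) {φ : ℝ → ℝ} {s c d : ℝ} (hcd : s ≤ c) :
    IntegrableOn (fun σ => Psi α φ s σ) (Ioc c d) volume :=
  integrableOn_zero.congr_fun
    (fun σ hσ => (Psi_zero hα0 (le_trans hcd hσ.1.le)).symm) measurableSet_Ioc

/-- The Fubini identity. -/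
lemma I2 (hα0 : 0 < α) (hα1 : α < 1) (hab : a < b) {φ : ℝ → ℝ} (hφc : Continuous φ)
    {M : ℝ} (hM : ∀ x, |φ x| ≤ M) (hM0 : 0 ≤ M) {t : ℝ} (ht : t ∈ Ioc a b) :
    ∫ s in a..t, (∫ τ in a..s, (s - τ) ^ (-α) * φ τ)
      = ∫ τ in a..t, φ τ * ((t - τ) ^ (1 - α) / (1 - α)) := by
  have h1α : (0:ℝ) < 1 - α := by linarith
  have hat : a < t := ht.1
  have htb : t ≤ b := ht.2
  have hAESM : AEStronglyMeasurable (Function.uncurry (Psi α φ))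
      ((volume.restrict (Ioc a t)).prod (volume.restrict (Ioc a t))) :=
    (Psi_measurable α hφc).aestronglyMeasurable
  -- integrability on the product
  have hInt : Integrable (Function.uncurry (Psi α φ))
      ((volume.restrict (Ioc a t)).prod (volume.restrict (Ioc a t))) := by
    rw [integrable_prod_iff hAESM]
    constructor
    · refine (ae_restrict_iff' measurableSet_Ioc).2 (Filter.Eventually.of_forall ?_)
      intro s hs
      show IntegrableOn (fun σ => Psi α φ s σ) (Ioc a t) volume
      rw [← Ioc_union_Ioc_eq_Ioc hs.1.le hs.2]
      exact (Psi_intOn_lower hα0 hα1 hφc hs.1.le).union (Psi_intOn_upper hα0 le_rfl)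
    · refine Integrable.mono' (g := fun _ => M * ((b - a) ^ (1 - α) / (1 - α)))
        (integrableOn_const measure_Ioc_lt_top.ne)
        (hAESM.norm.integral_prod_right') ?_
      refine (ae_restrict_iff' measurableSet_Ioc).2 (Filter.Eventually.of_forall ?_)
      intro s hs
      rw [Real.norm_eq_abs, abs_of_nonneg (integral_nonneg (fun σ => norm_nonneg _))]
      -- bound the integral of the norm
      have hsplit : (∫ σ in Ioc a t, ‖Psi α φ s σ‖)
          = (∫ σ in Ioc a s, ‖Psi α φ s σ‖) + ∫ σ in Ioc s t, ‖Psi α φ s σ‖ := by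
        rw [← Ioc_union_Ioc_eq_Ioc hs.1.le hs.2]
        exact setIntegral_union (Ioc_disjoint_Ioc_of_le le_rfl) measurableSet_Ioc
          (Psi_intOn_lower hα0 hα1 hφc hs.1.le).norm (Psi_intOn_upper hα0 le_rfl).norm
      have hz : (∫ σ in Ioc s t, ‖Psi α φ s σ‖) = 0 := by
        rw [setIntegral_congr_fun measurableSet_Ioc
          (fun σ hσ => by rw [Psi_zero hα0 hσ.1.le, norm_zero] : EqOn _ (fun _ => (0:ℝ)) _)]
        simp
      have hfirst : (∫ σ in Ioc a s, ‖Psi α φ s σ‖)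
          = ∫ σ in a..s, ‖(s - σ) ^ (-α) * φ σ‖ := by
        rw [intervalIntegral.integral_of_le hs.1.le]
        exact setIntegral_congr_fun measurableSet_Ioc (fun σ hσ => by rw [Psi_eq hσ.2])
      have hr : (s - a) ^ (1 - α) ≤ (b - a) ^ (1 - α) :=
        Real.rpow_le_rpow (by linarith [hs.1]) (by linarith [hs.2]) (by linarith)
      calc (∫ σ in Ioc a t, ‖Psi α φ s σ‖)
          = ∫ σ in a..s, ‖(s - σ) ^ (-α) * φ σ‖ := by rw [hsplit, hz, add_zero, hfirst]
        _ ≤ M * ((s - a) ^ (1 - α) / (1 - α)) := norm_int_le hα0 hα1 hφc hM hs.1.le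
        _ ≤ M * ((b - a) ^ (1 - α) / (1 - α)) := by gcongr
  have hswap := MeasureTheory.integral_integral_swap hInt
  have hL : (∫ s in a..t, (∫ τ in a..s, (s - τ) ^ (-α) * φ τ))
      = ∫ s in Ioc a t, (∫ σ in Ioc a t, Psi α φ s σ) := by
    rw [intervalIntegral.integral_of_le hat.le]
    apply setIntegral_congr_fun measurableSet_Ioc
    intro s hs
    dsimp only
    have hz : (∫ σ in Ioc s t, Psi α φ s σ) = 0 := by
      rw [setIntegral_congr_fun measurableSet_Ioc
        (fun σ hσ => Psi_zero hα0 hσ.1.le : EqOn _ (fun _ => (0:ℝ)) _)]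
      simp
    rw [show Ioc a t = Ioc a s ∪ Ioc s t from (Ioc_union_Ioc_eq_Ioc hs.1.le hs.2).symm,
      setIntegral_union (Ioc_disjoint_Ioc_of_le le_rfl) measurableSet_Ioc
        (Psi_intOn_lower hα0 hα1 hφc hs.1.le) (Psi_intOn_upper hα0 le_rfl),
      hz, add_zero, intervalIntegral.integral_of_le hs.1.le]
    exact setIntegral_congr_fun measurableSet_Ioc (fun σ hσ => (Psi_eq hσ.2).symm)
  have hR : (∫ σ in Ioc a t, (∫ s in Ioc a t, Psi α φ s σ))
      = ∫ τ in a..t, φ τ * ((t - τ) ^ (1 - α) / (1 - α)) := by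
    rw [intervalIntegral.integral_of_le hat.le]
    apply setIntegral_congr_fun measurableSet_Ioc
    intro σ hσ
    dsimp only
    have hq1 : IntegrableOn (fun s => Psi α φ s σ) (Ioc a σ) volume :=
      integrableOn_zero.congr_fun (fun s hs => (Psi_zero hα0 hs.2).symm) measurableSet_Ioc
    have hq2 : IntegrableOn (fun s => Psi α φ s σ) (Ioc σ t) volume := by
      have hbase : IntervalIntegrable (fun s => (s - σ) ^ (-α)) volume σ t := by
        have h := (intervalIntegrable_rpow' (by linarith : (-1:ℝ) < -α)
          (a := 0) (b := t - σ)).comp_sub_right σ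
        simpa using h
      exact ((intervalIntegrable_iff_integrableOn_Ioc_of_le hσ.2).mp
        (hbase.mul_const (φ σ))).congr_fun
        (fun s hs => by rw [Psi_eq hs.1.le]) measurableSet_Ioc
    have hz1 : (∫ s in Ioc a σ, Psi α φ s σ) = 0 := by
      rw [setIntegral_congr_fun measurableSet_Ioc
        (fun s hs => Psi_zero hα0 hs.2 : EqOn _ (fun _ => (0:ℝ)) _)]
      simp
    have hmain : (∫ s in Ioc σ t, Psi α φ s σ) = φ σ * ((t - σ) ^ (1 - α) / (1 - α)) := by
      have e1 : (∫ s in Ioc σ t, Psi α φ s σ) = ∫ s in Ioc σ t, (s - σ) ^ (-α) * φ σ :=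
        setIntegral_congr_fun measurableSet_Ioc (fun s hs => Psi_eq hs.1.le)
      have e2 : (∫ s in σ..t, (s - σ) ^ (-α)) = (t - σ) ^ (1 - α) / (1 - α) := by
        rw [intervalIntegral.integral_comp_sub_right (fun x : ℝ => x ^ (-α)) σ]
        simp only [sub_self]
        rw [integral_rpow (Or.inl (by linarith : (-1:ℝ) < -α))]
        rw [Real.zero_rpow (by intro hcon; nlinarith [hcon] : -α + 1 ≠ 0),
          show -α + 1 = 1 - α by ring, sub_zero]
      rw [e1, ← intervalIntegral.integral_of_le hσ.2, intervalIntegral.integral_mul_const, e2]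
      ring
    rw [show Ioc a t = Ioc a σ ∪ Ioc σ t from (Ioc_union_Ioc_eq_Ioc hσ.1.le hσ.2).symm,
      setIntegral_union (Ioc_disjoint_Ioc_of_le le_rfl) measurableSet_Ioc hq1 hq2, hz1, hmain, zero_add]
  rw [hL, ← hR]
  exact hswap

end Main2

section Main3

variable {a b α : ℝ}

/-- Substitution in the `K` integral. -/
lemma Ksub (α : ℝ) {φ : ℝ → ℝ} (u : ℝ) :
    (∫ τ in a..u, (u - τ) ^ (-α) * φ τ) = ∫ v in (0:ℝ)..(u - a), v ^ (-α) * φ (u - v) := by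
  have h := intervalIntegral.integral_comp_sub_left
    (a := a) (b := u) (fun v => v ^ (-α) * φ (u - v)) u
  rw [sub_self] at h
  rw [← h]
  apply intervalIntegral.integral_congr
  intro x _
  simp [sub_sub_cancel]

/-- The truncated integrand. -/
noncomputable def Fe (a α : ℝ) (φ : ℝ → ℝ) (u v : ℝ) : ℝ :=
  if v ≤ u - a then v ^ (-α) * φ (u - v) else 0

lemma Fe_intble_lower (hα1 : α < 1) {φ : ℝ → ℝ} (hφc : Continuous φ) {u : ℝ} (hu : a ≤ u) :
    IntervalIntegrable (Fe a α φ u) volume 0 (u - a) := by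
  rw [intervalIntegrable_iff, uIoc_of_le (by linarith : (0:ℝ) ≤ u - a)]
  have hbase : IntervalIntegrable (fun v => v ^ (-α) * φ (u - v)) volume 0 (u - a) :=
    (intervalIntegrable_rpow' (by linarith)).mul_continuousOn
      ((hφc.comp (continuous_const.sub continuous_id)).continuousOn)
  rw [intervalIntegrable_iff, uIoc_of_le (by linarith : (0:ℝ) ≤ u - a)] at hbase
  exact hbase.congr_fun (fun v hv => by rw [Fe, if_pos hv.2]) measurableSet_Ioc

lemma Fe_intble_upper (α : ℝ) (φ : ℝ → ℝ) {u c d : ℝ} (hc : u - a ≤ c) (hcd : c ≤ d) :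
    IntervalIntegrable (Fe a α φ u) volume c d := by
  rw [intervalIntegrable_iff, uIoc_of_le hcd]
  exact integrableOn_zero.congr_fun
    (fun v hv => by rw [Fe, if_neg (by linarith [hv.1] : ¬ v ≤ u - a)]) measurableSet_Ioc

lemma Kext (hα1 : α < 1) (hab : a < b) {φ : ℝ → ℝ} (hφc : Continuous φ)
    {u : ℝ} (hu : u ∈ Ioc a b) :
    (∫ v in (0:ℝ)..(u - a), v ^ (-α) * φ (u - v)) = ∫ v in (0:ℝ)..(b - a), Fe a α φ u v := by
  have h1 : IntervalIntegrable (Fe a α φ u) volume 0 (u - a) :=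
    Fe_intble_lower hα1 hφc hu.1.le
  have h2 : IntervalIntegrable (Fe a α φ u) volume (u - a) (b - a) :=
    Fe_intble_upper α φ le_rfl (by linarith [hu.2])
  rw [← intervalIntegral.integral_add_adjacent_intervals h1 h2]
  have hz : (∫ v in (u - a)..(b - a), Fe a α φ u v) = 0 := by
    rw [intervalIntegral.integral_congr_ae (g := fun _ => (0:ℝ)) ?_, intervalIntegral.integral_const]
    · simp
    · apply Filter.Eventually.of_forall
      intro v hv
      rw [uIoc_of_le (by linarith [hu.2] : u - a ≤ b - a)] at hv
      rw [Fe, if_neg (by linarith [hv.1] : ¬ v ≤ u - a)]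
  rw [hz, add_zero]
  apply intervalIntegral.integral_congr
  intro v hv
  rw [uIcc_of_le (by linarith [hu.1] : (0:ℝ) ≤ u - a)] at hv
  rw [Fe, if_pos hv.2]

/-- Continuity of `K` at interior points. -/
lemma Kcont (hα0 : 0 < α) (hα1 : α < 1) (hab : a < b) {φ : ℝ → ℝ} (hφc : Continuous φ)
    {M : ℝ} (hM : ∀ x, |φ x| ≤ M) {t₀ : ℝ} (ht₀ : t₀ ∈ Ioo a b) :
    ContinuousAt (fun u => ∫ τ in a..u, (u - τ) ^ (-α) * φ τ) t₀ := by
  have hM0 : 0 ≤ M := le_trans (abs_nonneg _) (hM 0)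
  have hK' : ContinuousAt (fun u => ∫ v in (0:ℝ)..(b - a), Fe a α φ u v) t₀ := by
    apply intervalIntegral.continuousAt_of_dominated_interval
      (bound := fun v => M * v ^ (-α))
    · apply Filter.Eventually.of_forall
      intro u
      apply Measurable.aestronglyMeasurable
      exact Measurable.ite measurableSet_Iic
        ((measurable_rpow_const (-α)).mul
          (hφc.measurable.comp (measurable_const.sub measurable_id)))
        measurable_const
    · apply Filter.Eventually.of_forall
      intro u
      apply Filter.Eventually.of_forall
      intro v hv
      rw [uIoc_of_le (by linarith [ht₀.1, ht₀.2] : (0:ℝ) ≤ b - a)] at hv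
      by_cases hcase : v ≤ u - a
      · rw [Fe, if_pos hcase, Real.norm_eq_abs, abs_mul,
          abs_of_nonneg (Real.rpow_nonneg hv.1.le _)]
        calc v ^ (-α) * |φ (u - v)| ≤ v ^ (-α) * M :=
              mul_le_mul_of_nonneg_left (hM _) (Real.rpow_nonneg hv.1.le _)
          _ = M * v ^ (-α) := mul_comm _ _
      · rw [Fe, if_neg hcase]
        simp only [norm_zero]
        exact mul_nonneg hM0 (Real.rpow_nonneg hv.1.le _)
    · exact (intervalIntegrable_rpow' (by linarith)).const_mul M
    · have hae : ∀ᵐ v : ℝ, v ≠ t₀ - a := by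
        refine (MeasureTheory.ae_iff).2 ?_
        have : {v : ℝ | ¬ v ≠ t₀ - a} = {t₀ - a} := by ext v; simp
        rw [this]
        exact Real.volume_singleton
      filter_upwards [hae] with v hv _
      rcases lt_or_gt_of_ne hv with h1 | h1
      · have hc : ContinuousAt (fun u => v ^ (-α) * φ (u - v)) t₀ :=
          (continuous_const.mul (hφc.comp (continuous_id.sub continuous_const))).continuousAt
        apply hc.congr
        filter_upwards [eventually_gt_nhds (by linarith : v + a < t₀)] with u hu
        rw [Fe, if_pos (by linarith : v ≤ u - a)]
      · apply continuousAt_const.congr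
        filter_upwards [eventually_lt_nhds (by linarith : t₀ < v + a)] with u hu
        rw [Fe, if_neg (by push_neg; linarith : ¬ v ≤ u - a)]
  apply hK'.congr
  filter_upwards [Ioo_mem_nhds ht₀.1 ht₀.2] with u hu
  rw [Ksub, Kext hα1 hab hφc ⟨hu.1, hu.2.le⟩]

/-- `K` is interval integrable on `[a, t₀]`. -/
lemma Kintble (hα0 : 0 < α) (hα1 : α < 1) (hab : a < b) {φ : ℝ → ℝ} (hφc : Continuous φ)
    {M : ℝ} (hM : ∀ x, |φ x| ≤ M) {t₀ : ℝ} (ht₀ : t₀ ∈ Ioo a b) :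
    IntervalIntegrable (fun u => ∫ τ in a..u, (u - τ) ^ (-α) * φ τ) volume a t₀ := by
  have hM0 : 0 ≤ M := le_trans (abs_nonneg _) (hM 0)
  have h1α : (0:ℝ) < 1 - α := by linarith
  apply ContinuousOn.intervalIntegrable
  rw [uIcc_of_le ht₀.1.le]
  intro x hx
  rcases eq_or_lt_of_le hx.1 with heq | hlt
  · -- x = a
    have hg : Tendsto (fun u => M * ((u - a) ^ (1 - α) / (1 - α))) (𝓝[Icc a t₀] a) (𝓝 0) := by
      have hc : Continuous (fun u : ℝ => M * ((u - a) ^ (1 - α) / (1 - α))) :=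
        continuous_const.mul (((Real.continuous_rpow_const h1α.le).comp
          (continuous_id.sub continuous_const)).div_const _)
      have := (hc.tendsto a).mono_left (nhdsWithin_le_nhds (s := Icc a t₀))
      simpa [Real.zero_rpow (by linarith : (1:ℝ) - α ≠ 0)] using this
    have hsq : Tendsto (fun u => ∫ τ in a..u, (u - τ) ^ (-α) * φ τ) (𝓝[Icc a t₀] a) (𝓝 0) := by
      apply squeeze_zero_norm' ?_ hg
      filter_upwards [self_mem_nhdsWithin] with u hu
      rw [Real.norm_eq_abs]
      exact kbound hα0 hα1 hφc hM hu.1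
    rw [← heq]
    have hfa : (∫ τ in a..a, (a - τ) ^ (-α) * φ τ) = 0 := intervalIntegral.integral_same
    show Tendsto (fun u => ∫ τ in a..u, (u - τ) ^ (-α) * φ τ) (𝓝[Icc a t₀] a)
      (𝓝 (∫ τ in a..a, (a - τ) ^ (-α) * φ τ))
    rw [hfa]
    exact hsq
  · exact (Kcont hα0 hα1 hab hφc hM ⟨hlt, lt_of_le_of_lt hx.2 ht₀.2⟩).continuousWithinAt

end Main3

section Main4

variable {a b α : ℝ}

/-- The derivative of the Riemann–Liouville integral. -/
lemma hasDerivF (hα0 : 0 < α) (hα1 : α < 1) (hab : a < b) {f φ : ℝ → ℝ}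
    (hfc : ContinuousOn f (Icc a b)) (hd : ∀ x ∈ Ioo a b, HasDerivAt f (φ x) x)
    (hφc : Continuous φ) {M : ℝ} (hM : ∀ x, |φ x| ≤ M) {t₀ : ℝ} (ht₀ : t₀ ∈ Ioo a b) :
    HasDerivAt (fun s => ∫ τ in a..s, (s - τ) ^ (-α) * f τ)
      (f a * (t₀ - a) ^ (-α) + ∫ τ in a..t₀, (t₀ - τ) ^ (-α) * φ τ) t₀ := by
  have hM0 : 0 ≤ M := le_trans (abs_nonneg _) (hM 0)
  have h1α : (0:ℝ) < 1 - α := by linarith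
  have hne : t₀ - a ≠ 0 := ne_of_gt (by linarith [ht₀.1])
  have hR1 : HasDerivAt (fun s => f a * ((s - a) ^ (1 - α) / (1 - α)))
      (f a * (t₀ - a) ^ (-α)) t₀ := by
    have hbase : HasDerivAt (fun s : ℝ => s - a) 1 t₀ := (hasDerivAt_id t₀).sub_const a
    have h2 : HasDerivAt (fun s : ℝ => (s - a) ^ (1 - α))
        (1 * (1 - α) * (t₀ - a) ^ (1 - α - 1)) t₀ := hbase.rpow_const (Or.inl hne)
    have h3 := (h2.div_const (1 - α)).const_mul (f a)
    convert h3 using 1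
    case e'_4 => rfl
    case e'_5 => rfl
    rw [show (1:ℝ) - α - 1 = -α by ring]
    field_simp
  have hR2 : HasDerivAt (fun s => ∫ u in a..s, (∫ τ in a..u, (u - τ) ^ (-α) * φ τ))
      (∫ τ in a..t₀, (t₀ - τ) ^ (-α) * φ τ) t₀ := by
    refine intervalIntegral.integral_hasDerivAt_right
      (Kintble hα0 hα1 hab hφc hM ht₀)
      ⟨Ioo a b, Ioo_mem_nhds ht₀.1 ht₀.2, ?_⟩
      (Kcont hα0 hα1 hab hφc hM ht₀)
    exact (continuousOn_of_forall_continuousAt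
      (fun x hx => Kcont hα0 hα1 hab hφc hM hx)).aestronglyMeasurable measurableSet_Ioo
  have hsum := hR1.add hR2
  have hev : (fun s => f a * ((s - a) ^ (1 - α) / (1 - α))
        + ∫ u in a..s, (∫ τ in a..u, (u - τ) ^ (-α) * φ τ))
      =ᶠ[𝓝 t₀] (fun s => ∫ τ in a..s, (s - τ) ^ (-α) * f τ) := by
    filter_upwards [Ioo_mem_nhds ht₀.1 ht₀.2] with s hs
    have hsIoc : s ∈ Ioc a b := ⟨hs.1, hs.2.le⟩
    have hI1 := I1 hα0 hα1 hfc hd hφc hsIoc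
    have hI2 := I2 hα0 hα1 hab hφc hM hM0 hsIoc
    rw [hI1, hI2]
  exact (Filter.EventuallyEq.hasDerivAt_iff hev).1 hsum

end Main4

end LeftRLAux

/-- If `f` is continuously differentiable on `[a,b]` and `f(a) ≠ 0`, then the left
Riemann–Liouville fractional derivative `ₐD_t^α f(t)` blows up as `t → a⁺`.
Consequently, if `t ↦ ₐD_t^α f(t)` exists on `(a,b]` and extends to a continuous
function on all of `[a,b]`, then `f(a) = 0`. -/
theorem leftRL_blowup_of_ne_zero_at_left_endpoint
    (a b α : ℝ) (hab : a < b) (hα0 : 0 < α) (hα1 : α < 1)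
    (f : ℝ → ℝ) (hf : ContDiffOn ℝ 1 f (Set.Icc a b)) :
    (f a ≠ 0 →
      Filter.Tendsto (fun t => |leftRL a α f t|) (nhdsWithin a (Set.Ioi a))
        Filter.atTop) ∧
    (∀ g : ℝ → ℝ,
      (∀ t ∈ Set.Ioc a b,
        DifferentiableAt ℝ (fun s => ∫ τ in a..s, (s - τ) ^ (-α) * f τ) t) →
      ContinuousOn g (Set.Icc a b) →
      (∀ t ∈ Set.Ioc a b, g t = leftRL a α f t) →
      f a = 0) := by
  classical
  open LeftRLAux in
  have hΓ : 0 < Real.Gamma (1 - α) := Real.Gamma_pos_of_pos (by linarith)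
  -- construct a continuous global extension of the derivative
  set d := derivWithin f (Set.Icc a b) with hd_def
  have hdc : ContinuousOn d (Set.Icc a b) :=
    hf.continuousOn_derivWithin (uniqueDiffOn_Icc hab) le_rfl
  set clamp : ℝ → ℝ := fun x => min b (max a x) with hclamp_def
  have hclamp_mem : ∀ x, clamp x ∈ Set.Icc a b :=
    fun x => ⟨le_min hab.le (le_max_left _ _), min_le_left _ _⟩
  have hclamp_cont : Continuous clamp :=
    continuous_const.min (continuous_const.max continuous_id)
  set φ : ℝ → ℝ := fun x => d (clamp x) with hφ_def
  have hφc : Continuous φ := hdc.comp_continuous hclamp_cont hclamp_mem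
  have hd' : ∀ x ∈ Set.Ioo a b, HasDerivAt f (φ x) x := by
    intro x hx
    have hmem : x ∈ Set.Icc a b := ⟨hx.1.le, hx.2.le⟩
    have h1 : DifferentiableWithinAt ℝ f (Set.Icc a b) x := (hf.differentiableOn one_ne_zero) x hmem
    have h2 := h1.hasDerivWithinAt.hasDerivAt (Icc_mem_nhds hx.1 hx.2)
    have hcl : clamp x = x := by
      rw [hclamp_def]; simp only [max_eq_right hx.1.le, min_eq_right hx.2.le]
    have : φ x = d x := by rw [hφ_def]; simp only [hcl]
    rw [this]
    exact h2
  obtain ⟨M0, hM0b⟩ := (isCompact_Icc : IsCompact (Set.Icc a b)).exists_bound_of_continuousOn hdc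
  set M := max M0 0 with hM_def
  have hM : ∀ x, |φ x| ≤ M := by
    intro x
    refine le_trans ?_ (le_max_left M0 0)
    simpa [Real.norm_eq_abs] using hM0b (clamp x) (hclamp_mem x)
  have hM0 : 0 ≤ M := le_max_right _ _
  have hfc : ContinuousOn f (Set.Icc a b) := hf.continuousOn
  have hΓ' : (0:ℝ) < 1 / Real.Gamma (1 - α) := one_div_pos.2 hΓ
  -- key formula for `leftRL` on the interior
  have hkey : ∀ t ∈ Set.Ioo a b, leftRL a α f t
      = (1 / Real.Gamma (1 - α))
        * (f a * (t - a) ^ (-α) + ∫ τ in a..t, (t - τ) ^ (-α) * φ τ) := by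
    intro t ht
    unfold leftRL
    rw [(hasDerivF hα0 hα1 hab hfc hd' hφc hM ht).deriv]
  set C := M * ((b - a) ^ (1 - α) / (1 - α)) with hC_def
  have hblow : f a ≠ 0 →
      Filter.Tendsto (fun t => |leftRL a α f t|) (nhdsWithin a (Set.Ioi a)) Filter.atTop := by
    intro hfa
    have hlow : Tendsto (fun t => (1 / Real.Gamma (1 - α)) * (|f a| * (t - a) ^ (-α) - C))
        (nhdsWithin a (Set.Ioi a)) atTop := by
      have h1 : Tendsto (fun t : ℝ => t - a) (nhdsWithin a (Set.Ioi a))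
          (nhdsWithin 0 (Set.Ioi (0:ℝ))) := by
        refine tendsto_nhdsWithin_iff.2 ⟨?_, ?_⟩
        · have hc : Continuous (fun t : ℝ => t - a) := continuous_id.sub continuous_const
          have := (hc.tendsto a).mono_left (nhdsWithin_le_nhds (s := Set.Ioi a))
          simpa using this
        · filter_upwards [self_mem_nhdsWithin] with t ht
          exact sub_pos.2 (mem_Ioi.mp ht)
      have h2 : Tendsto (fun x : ℝ => x ^ (-α)) (nhdsWithin 0 (Set.Ioi (0:ℝ))) atTop := by
        have h3 := (tendsto_rpow_atTop hα0).comp tendsto_inv_nhdsGT_zero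
        apply h3.congr'
        filter_upwards [self_mem_nhdsWithin] with x hx
        have hx' : (0:ℝ) < x := hx
        rw [Function.comp_apply, Real.inv_rpow hx'.le, ← Real.rpow_neg hx'.le]
      have h4 := h2.comp h1
      have h5 := h4.const_mul_atTop (abs_pos.2 hfa)
      have h6 := tendsto_atTop_add_const_right _ (-C) h5
      have h7 := h6.const_mul_atTop hΓ'
      apply h7.congr
      intro t
      simp only [Function.comp_apply]
      ring
    apply tendsto_atTop_mono' _ ?_ hlow
    filter_upwards [Ioo_mem_nhdsGT_of_mem ⟨le_rfl, hab⟩] with t ht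
    have hta : (0:ℝ) < t - a := sub_pos.2 ht.1
    rw [hkey t ht, abs_mul, abs_of_pos hΓ']
    apply mul_le_mul_of_nonneg_left _ hΓ'.le
    have hKb : |∫ τ in a..t, (t - τ) ^ (-α) * φ τ| ≤ C := by
      refine (kbound hα0 hα1 hφc hM ht.1.le).trans ?_
      have hr : (t - a) ^ (1 - α) ≤ (b - a) ^ (1 - α) :=
        Real.rpow_le_rpow (by linarith) (by linarith [ht.2]) (by linarith)
      rw [hC_def]
      gcongr <;> linarith
    have habs : |f a| * (t - a) ^ (-α) = |f a * (t - a) ^ (-α)| := by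
      rw [abs_mul, abs_of_nonneg (Real.rpow_nonneg hta.le _)]
    have htri := abs_sub_abs_le_abs_sub (f a * (t - a) ^ (-α))
      (-(∫ τ in a..t, (t - τ) ^ (-α) * φ τ))
    rw [abs_neg, sub_neg_eq_add] at htri
    calc |f a| * (t - a) ^ (-α) - C
        ≤ |f a * (t - a) ^ (-α)| - |∫ τ in a..t, (t - τ) ^ (-α) * φ τ| := by
          rw [← habs]; linarith [hKb]
      _ ≤ |f a * (t - a) ^ (-α) + ∫ τ in a..t, (t - τ) ^ (-α) * φ τ| := htri
  refine ⟨hblow, ?_⟩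
  intro g _ hgc hgeq
  by_contra hfa
  have h1 := hblow hfa
  have h2 : Tendsto (fun t => |leftRL a α f t|) (nhdsWithin a (Set.Ioi a)) (𝓝 |g a|) := by
    have hle : nhdsWithin a (Set.Ioi a) ≤ nhdsWithin a (Set.Icc a b) :=
      nhdsWithin_le_of_mem (Filter.mem_of_superset
        (Ioc_mem_nhdsGT_of_mem ⟨le_rfl, hab⟩) Set.Ioc_subset_Icc_self)
    have hgt : Tendsto g (nhdsWithin a (Set.Ioi a)) (𝓝 (g a)) :=
      (hgc a ⟨le_rfl, hab.le⟩).mono_left hle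
    have habs : Tendsto (fun t => |g t|) (nhdsWithin a (Set.Ioi a)) (𝓝 |g a|) :=
      (continuous_abs.tendsto _).comp hgt
    apply habs.congr'
    filter_upwards [Ioc_mem_nhdsGT_of_mem ⟨le_rfl, hab⟩] with t ht
    rw [hgeq t ht]
  exact absurd h1 (not_tendsto_atTop_of_tendsto_nhds h2)
end

section
/- Let a < b be real numbers, 0 < α < 1, and let f : [a,b] → ℝ be continuously differentiable with f(b) ≠ 0. Then the right Riemann–Liouville fractional derivative ₜD_b^α f(t) blows up at the right endpoint: |ₜD_b^α f(t)| → ∞ as t → b⁻. Consequently, if f is continuously differentiable and t ↦ ₜD_b^α f(t) extends to a continuous function on all of [a,b], then f(b) = 0. -/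
open MeasureTheory intervalIntegral Set Filter

noncomputable def Paux (b α : ℝ) (f : ℝ → ℝ) (s : ℝ) : ℝ :=
  ∫ v in (0:ℝ)..1, v ^ (-α) * f (s + (b - s) * v)

noncomputable def Qaux (a b α : ℝ) (f : ℝ → ℝ) (s : ℝ) : ℝ :=
  ∫ v in (0:ℝ)..1, v ^ (-α) * ((1 - v) * derivWithin f (Set.Icc a b) (s + (b - s) * v))

lemma mapsto_aux {a b s : ℝ} (has : a ≤ s) (hsb : s ≤ b) :
    ∀ v ∈ Set.Icc (0:ℝ) 1, s + (b - s) * v ∈ Set.Icc a b := by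
  intro v hv
  constructor <;> nlinarith [hv.1, hv.2]

lemma meas_comp_aux {a b s : ℝ} (has : a ≤ s) (hsb : s ≤ b) {h : ℝ → ℝ}
    (hh : ContinuousOn h (Set.Icc a b)) :
    AEStronglyMeasurable (fun v => h (s + (b - s) * v))
      (volume.restrict (Set.Ioc (0:ℝ) 1)) := by
  have hcont : ContinuousOn (fun v : ℝ => h (s + (b - s) * v)) (Set.Ioc (0:ℝ) 1) := by
    apply hh.comp ((continuous_const.add (continuous_const.mul continuous_id)).continuousOn)
    intro v hv
    exact mapsto_aux has hsb v ⟨le_of_lt hv.1, hv.2⟩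
  exact hcont.aestronglyMeasurable measurableSet_Ioc

lemma aux_intervalIntegrable (α : ℝ) (hα1 : α < 1) (h : ℝ → ℝ) (C : ℝ)
    (hmeas : AEStronglyMeasurable h (volume.restrict (Set.Ioc (0:ℝ) 1)))
    (hbd : ∀ v ∈ Set.Ioc (0:ℝ) 1, ‖h v‖ ≤ C) :
    IntervalIntegrable (fun v => v ^ (-α) * h v) volume 0 1 := by
  have hint : IntervalIntegrable (fun v : ℝ => v ^ (-α) * C) volume 0 1 :=
    (intervalIntegral.intervalIntegrable_rpow' (by linarith)).mul_const C
  refine hint.mono_fun ?_ ?_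
  · have hcont : ContinuousOn (fun v : ℝ => v ^ (-α)) (Set.Ioc (0:ℝ) 1) :=
      continuousOn_id.rpow_const (fun x hx => Or.inl (ne_of_gt hx.1))
    rw [uIoc_of_le (by norm_num : (0:ℝ) ≤ 1)]
    exact (hcont.aestronglyMeasurable measurableSet_Ioc).mul hmeas
  · rw [uIoc_of_le (by norm_num : (0:ℝ) ≤ 1)]
    filter_upwards [ae_restrict_mem measurableSet_Ioc] with v hv
    have h0 : (0:ℝ) ≤ v ^ (-α) := Real.rpow_nonneg (le_of_lt hv.1) _
    calc ‖v ^ (-α) * h v‖ = v ^ (-α) * ‖h v‖ := by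
          rw [norm_mul, Real.norm_of_nonneg h0]
      _ ≤ v ^ (-α) * C := mul_le_mul_of_nonneg_left (hbd v hv) h0
      _ ≤ ‖v ^ (-α) * C‖ := le_abs_self _

lemma key_hasDerivAt (a b α : ℝ) (hab : a < b) (hα0 : 0 < α) (hα1 : α < 1)
    (f : ℝ → ℝ) (hf : ContDiffOn ℝ 1 f (Set.Icc a b)) {t : ℝ} (ht : t ∈ Set.Ioo a b) :
    HasDerivAt (fun s => ∫ τ in s..b, (τ - s) ^ (-α) * f τ)
      ((b - t) ^ (-α) * ((b - t) * Qaux a b α f t - (1 - α) * Paux b α f t)) t := by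
  set g := derivWithin f (Set.Icc a b) with hg
  have hgc : ContinuousOn g (Set.Icc a b) :=
    hf.continuousOn_derivWithin (uniqueDiffOn_Icc hab) le_rfl
  obtain ⟨M, hM⟩ := isCompact_Icc.exists_bound_of_continuousOn hgc
  obtain ⟨Mf, hMf⟩ := isCompact_Icc.exists_bound_of_continuousOn hf.continuousOn
  set ε := min (t - a) (b - t) with hε
  have hεpos : 0 < ε := lt_min (by linarith [ht.1]) (by linarith [ht.2])
  have hball : Metric.ball t ε ⊆ Set.Ioo a b := by
    rw [Real.ball_eq_Ioo]
    intro s hs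
    have h1 : ε ≤ t - a := min_le_left _ _
    have h2 : ε ≤ b - t := min_le_right _ _
    exact ⟨by linarith [hs.1], by linarith [hs.2]⟩
  have hone : ∀ᵐ v : ℝ, v ≠ (1:ℝ) := by
    refine ae_iff.2 ?_
    simpa using Real.volume_singleton (a := (1:ℝ))
  have leib := intervalIntegral.hasDerivAt_integral_of_dominated_loc_of_deriv_le
      (μ := volume) (a := 0) (b := 1) (x₀ := t)
      (F := fun s v => v ^ (-α) * f (s + (b - s) * v))
      (F' := fun s v => v ^ (-α) * ((1 - v) * g (s + (b - s) * v)))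
      (bound := fun v => v ^ (-α) * M) (Metric.ball_mem_nhds t hεpos) ?meas ?int ?meas' ?bd ?bint ?diff
  case meas =>
    filter_upwards [Ioo_mem_nhds ht.1 ht.2] with s hs
    rw [uIoc_of_le (by norm_num : (0:ℝ) ≤ 1)]
    have hcont : ContinuousOn (fun v : ℝ => v ^ (-α)) (Set.Ioc (0:ℝ) 1) :=
      continuousOn_id.rpow_const (fun x hx => Or.inl (ne_of_gt hx.1))
    exact (hcont.aestronglyMeasurable measurableSet_Ioc).mul
      (meas_comp_aux (le_of_lt hs.1) (le_of_lt hs.2) hf.continuousOn)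
  case int =>
    refine aux_intervalIntegrable α hα1 _ Mf
      (meas_comp_aux (le_of_lt ht.1) (le_of_lt ht.2) hf.continuousOn) ?_
    intro v hv
    exact hMf _ (mapsto_aux (le_of_lt ht.1) (le_of_lt ht.2) v ⟨le_of_lt hv.1, hv.2⟩)
  case meas' =>
    rw [uIoc_of_le (by norm_num : (0:ℝ) ≤ 1)]
    have hcont : ContinuousOn (fun v : ℝ => v ^ (-α)) (Set.Ioc (0:ℝ) 1) :=
      continuousOn_id.rpow_const (fun x hx => Or.inl (ne_of_gt hx.1))
    refine (hcont.aestronglyMeasurable measurableSet_Ioc).mul ?_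
    refine AEStronglyMeasurable.mul ?_ (meas_comp_aux (le_of_lt ht.1) (le_of_lt ht.2) hgc)
    exact (continuous_const.sub continuous_id).aestronglyMeasurable.restrict
  case bd =>
    refine Filter.Eventually.of_forall ?_
    intro v hv s hs
    rw [uIoc_of_le (by norm_num : (0:ℝ) ≤ 1)] at hv
    have hs' := hball hs
    have hx : s + (b - s) * v ∈ Set.Icc a b :=
      mapsto_aux (le_of_lt hs'.1) (le_of_lt hs'.2) v ⟨le_of_lt hv.1, hv.2⟩
    have h0 : (0:ℝ) ≤ v ^ (-α) := Real.rpow_nonneg (le_of_lt hv.1) _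
    have h1v : (0:ℝ) ≤ 1 - v := by linarith [hv.2]
    have hgx := hM _ hx
    calc ‖v ^ (-α) * ((1 - v) * g (s + (b - s) * v))‖
        = v ^ (-α) * ((1 - v) * ‖g (s + (b - s) * v)‖) := by
          rw [norm_mul, norm_mul, Real.norm_of_nonneg h0, Real.norm_of_nonneg h1v]
      _ ≤ v ^ (-α) * M := by
          refine mul_le_mul_of_nonneg_left ?_ h0
          nlinarith [mul_nonneg (le_of_lt hv.1) (norm_nonneg (g (s + (b - s) * v)))]
  case bint =>
    exact (intervalIntegral.intervalIntegrable_rpow' (by linarith)).mul_const M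
  case diff =>
    filter_upwards [hone] with v hv1
    intro hv s hs
    rw [uIoc_of_le (by norm_num : (0:ℝ) ≤ 1)] at hv
    have hvlt : v < 1 := lt_of_le_of_ne hv.2 hv1
    have hs' := hball hs
    have hx : s + (b - s) * v ∈ Set.Ioo a b := by
      constructor <;> nlinarith [hs'.1, hs'.2, hv.1, hvlt]
    have hnf : Set.Icc a b ∈ nhds (s + (b - s) * v) := Icc_mem_nhds hx.1 hx.2
    have hdx : DifferentiableAt ℝ f (s + (b - s) * v) :=
      ((hf.differentiableOn one_ne_zero) _ (mem_of_mem_nhds hnf)).differentiableAt hnf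
    have hgx : g (s + (b - s) * v) = deriv f (s + (b - s) * v) :=
      derivWithin_of_mem_nhds hnf
    have haff : HasDerivAt (fun s => s + (b - s) * v) (1 - v) s := by
      have := (hasDerivAt_id s).add (((hasDerivAt_const s b).sub (hasDerivAt_id s)).mul_const v)
      refine this.congr_deriv ?_
      ring
    have hcomp : HasDerivAt (fun s => f (s + (b - s) * v))
        (deriv f (s + (b - s) * v) * (1 - v)) s := hdx.hasDerivAt.comp s haff
    have := hcomp.const_mul (v ^ (-α))
    refine this.congr_deriv ?_
    rw [hgx]; ring
  -- now leib.2 : HasDerivAt (fun s => ∫ v in 0..1, ...) (Qaux ...) t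
  have hP : HasDerivAt (fun s => Paux b α f s) (Qaux a b α f t) t := by
    simpa [Paux, Qaux, hg] using leib.2
  have hbt : 0 < b - t := by linarith [ht.2]
  have hsub : ∀ s ∈ Set.Ioo a b,
      (∫ τ in s..b, (τ - s) ^ (-α) * f τ) = (b - s) ^ (1 - α) * Paux b α f s := by
    intro s hs
    have hbs : (0:ℝ) < b - s := by linarith [hs.2]
    have h1 := intervalIntegral.integral_comp_mul_add
      (a := 0) (b := 1) (c := b - s) (fun τ => (τ - s) ^ (-α) * f τ) (ne_of_gt hbs) s
    have e0 : (b - s) * 0 + s = s := by ring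
    have e1 : (b - s) * 1 + s = b := by ring
    rw [e0, e1, smul_eq_mul] at h1
    have h2 : (∫ v in (0:ℝ)..1, ((b - s) * v + s - s) ^ (-α) * f ((b - s) * v + s))
        = (b - s) ^ (-α) * Paux b α f s := by
      rw [Paux, ← intervalIntegral.integral_const_mul]
      refine intervalIntegral.integral_congr ?_
      intro v hv
      rw [Set.uIcc_of_le (by norm_num : (0:ℝ) ≤ 1)] at hv
      dsimp only
      have : (b - s) * v + s - s = (b - s) * v := by ring
      rw [this, Real.mul_rpow (le_of_lt hbs) hv.1]
      have : (b - s) * v + s = s + (b - s) * v := by ring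
      rw [this]; ring
    rw [h2] at h1
    have : (∫ τ in s..b, (τ - s) ^ (-α) * f τ) = (b - s) * ((b - s) ^ (-α) * Paux b α f s) := by
      field_simp at h1 ⊢
      linarith [h1]
    rw [this, show (1:ℝ) - α = 1 + (-α) by ring, Real.rpow_add hbs, Real.rpow_one]
    ring
  have hrp : HasDerivAt (fun s => (b - s) ^ (1 - α)) (-((1 - α) * (b - t) ^ (-α))) t := by
    have h1 : HasDerivAt (fun x : ℝ => x ^ (1 - α)) ((1 - α) * (b - t) ^ (1 - α - 1)) (b - t) :=
      Real.hasDerivAt_rpow_const (Or.inl (ne_of_gt hbt))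
    have h2 : HasDerivAt (fun s : ℝ => b - s) (-1) t := by
      simpa using (hasDerivAt_id t).const_sub b
    have h12 := h1.comp t h2
    refine h12.congr_deriv ?_
    rw [show (1:ℝ) - α - 1 = -α by ring]
    ring
  have hprod := hrp.mul hP
  have hfin : HasDerivAt (fun s => ∫ τ in s..b, (τ - s) ^ (-α) * f τ)
      (-((1 - α) * (b - t) ^ (-α)) * Paux b α f t + (b - t) ^ (1 - α) * Qaux a b α f t) t := by
    refine hprod.congr_of_eventuallyEq ?_
    filter_upwards [Ioo_mem_nhds ht.1 ht.2] with s hs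
    exact hsub s hs
  convert hfin using 1
  rw [show (1:ℝ) - α = 1 + (-α) by ring, Real.rpow_add hbt, Real.rpow_one]
  ring

lemma integral_rpow_mul_const (α C : ℝ) (hα0 : 0 < α) (hα1 : α < 1) :
    (∫ v in (0:ℝ)..1, v ^ (-α) * C) = C / (1 - α) := by
  rw [intervalIntegral.integral_mul_const,
    integral_rpow (Or.inl (by linarith : (-1:ℝ) < -α))]
  rw [Real.one_rpow, Real.zero_rpow (by linarith : -α + 1 ≠ 0)]
  field_simp
  ring

lemma Qaux_bound (a b α M : ℝ) (hab : a < b) (hα0 : 0 < α) (hα1 : α < 1)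
    (f : ℝ → ℝ)
    (hM : ∀ x ∈ Set.Icc a b, ‖derivWithin f (Set.Icc a b) x‖ ≤ M)
    {t : ℝ} (ht : t ∈ Set.Ico a b) : |Qaux a b α f t| ≤ M / (1 - α) := by
  have hM0 : 0 ≤ M := le_trans (norm_nonneg _) (hM a ⟨le_rfl, le_of_lt hab⟩)
  have key : ‖Qaux a b α f t‖ ≤ |∫ v in (0:ℝ)..1, v ^ (-α) * M| := by
    refine intervalIntegral.norm_integral_le_abs_of_norm_le ?_
      ((intervalIntegral.intervalIntegrable_rpow' (by linarith)).mul_const M)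
    rw [uIoc_of_le (by norm_num : (0:ℝ) ≤ 1)]
    filter_upwards [ae_restrict_mem measurableSet_Ioc] with v hv
    have hx : t + (b - t) * v ∈ Set.Icc a b :=
      mapsto_aux ht.1 (le_of_lt ht.2) v ⟨le_of_lt hv.1, hv.2⟩
    have h0 : (0:ℝ) ≤ v ^ (-α) := Real.rpow_nonneg (le_of_lt hv.1) _
    have h1v : (0:ℝ) ≤ 1 - v := by linarith [hv.2]
    calc ‖v ^ (-α) * ((1 - v) * derivWithin f (Set.Icc a b) (t + (b - t) * v))‖
        = v ^ (-α) * ((1 - v) * ‖derivWithin f (Set.Icc a b) (t + (b - t) * v)‖) := by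
          rw [norm_mul, norm_mul, Real.norm_of_nonneg h0, Real.norm_of_nonneg h1v]
      _ ≤ v ^ (-α) * M := by
          refine mul_le_mul_of_nonneg_left ?_ h0
          nlinarith [mul_nonneg (le_of_lt hv.1)
            (norm_nonneg (derivWithin f (Set.Icc a b) (t + (b - t) * v))), hM _ hx]
  rw [integral_rpow_mul_const α M hα0 hα1] at key
  calc |Qaux a b α f t| ≤ |M / (1 - α)| := key
    _ = M / (1 - α) := abs_of_nonneg (div_nonneg hM0 (by linarith))

lemma Paux_sub (a b α M : ℝ) (hab : a < b) (hα0 : 0 < α) (hα1 : α < 1)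
    (f : ℝ → ℝ) (hf : ContDiffOn ℝ 1 f (Set.Icc a b))
    (hM : ∀ x ∈ Set.Icc a b, ‖derivWithin f (Set.Icc a b) x‖ ≤ M)
    {t : ℝ} (ht : t ∈ Set.Ico a b) :
    |Paux b α f t - f b / (1 - α)| ≤ M * (b - t) / (1 - α) := by
  have hM0 : 0 ≤ M := le_trans (norm_nonneg _) (hM a ⟨le_rfl, le_of_lt hab⟩)
  obtain ⟨Mf, hMf⟩ := isCompact_Icc.exists_bound_of_continuousOn hf.continuousOn
  have hlip : ∀ x ∈ Set.Icc a b, ‖f x - f b‖ ≤ M * ‖x - b‖ := fun x hx =>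
    Convex.norm_image_sub_le_of_norm_derivWithin_le (hf.differentiableOn one_ne_zero) hM
      (convex_Icc a b) ⟨le_of_lt hab, le_rfl⟩ hx
  have hint1 : IntervalIntegrable (fun v => v ^ (-α) * f (t + (b - t) * v)) volume 0 1 := by
    refine aux_intervalIntegrable α hα1 _ Mf
      (meas_comp_aux ht.1 (le_of_lt ht.2) hf.continuousOn) ?_
    intro v hv
    exact hMf _ (mapsto_aux ht.1 (le_of_lt ht.2) v ⟨le_of_lt hv.1, hv.2⟩)
  have hint2 : IntervalIntegrable (fun v : ℝ => v ^ (-α) * f b) volume 0 1 :=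
    (intervalIntegral.intervalIntegrable_rpow' (by linarith)).mul_const _
  have hPdiff : Paux b α f t - f b / (1 - α)
      = ∫ v in (0:ℝ)..1, v ^ (-α) * (f (t + (b - t) * v) - f b) := by
    rw [← integral_rpow_mul_const α (f b) hα0 hα1, Paux,
      ← intervalIntegral.integral_sub hint1 hint2]
    congr 1
    ext v
    ring
  rw [hPdiff]
  have key : ‖∫ v in (0:ℝ)..1, v ^ (-α) * (f (t + (b - t) * v) - f b)‖
      ≤ |∫ v in (0:ℝ)..1, v ^ (-α) * (M * (b - t))| := by
    refine intervalIntegral.norm_integral_le_abs_of_norm_le ?_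
      ((intervalIntegral.intervalIntegrable_rpow' (by linarith)).mul_const _)
    rw [uIoc_of_le (by norm_num : (0:ℝ) ≤ 1)]
    filter_upwards [ae_restrict_mem measurableSet_Ioc] with v hv
    have hx : t + (b - t) * v ∈ Set.Icc a b :=
      mapsto_aux ht.1 (le_of_lt ht.2) v ⟨le_of_lt hv.1, hv.2⟩
    have h0 : (0:ℝ) ≤ v ^ (-α) := Real.rpow_nonneg (le_of_lt hv.1) _
    have hlx := hlip _ hx
    have habs : ‖t + (b - t) * v - b‖ ≤ b - t := by
      rw [Real.norm_eq_abs, abs_of_nonpos (by nlinarith [hv.2, ht.2] : t + (b - t) * v - b ≤ 0)]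
      nlinarith [hv.1, ht.2]
    calc ‖v ^ (-α) * (f (t + (b - t) * v) - f b)‖
        = v ^ (-α) * ‖f (t + (b - t) * v) - f b‖ := by
          rw [norm_mul, Real.norm_of_nonneg h0]
      _ ≤ v ^ (-α) * (M * (b - t)) := by
          refine mul_le_mul_of_nonneg_left ?_ h0
          calc ‖f (t + (b - t) * v) - f b‖ ≤ M * ‖t + (b - t) * v - b‖ := hlx
            _ ≤ M * (b - t) := mul_le_mul_of_nonneg_left habs hM0
  rw [integral_rpow_mul_const α (M * (b - t)) hα0 hα1] at key
  calc |∫ v in (0:ℝ)..1, v ^ (-α) * (f (t + (b - t) * v) - f b)|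
      ≤ |M * (b - t) / (1 - α)| := key
    _ = M * (b - t) / (1 - α) := abs_of_nonneg (by
        apply div_nonneg (mul_nonneg hM0 (by linarith [ht.2])) (by linarith))

/-- If `f` is continuously differentiable on `[a,b]` and `f(b) ≠ 0`, then the right
Riemann–Liouville fractional derivative `ₜD_b^α f(t)` blows up as `t → b⁻`.
Consequently, if `t ↦ ₜD_b^α f(t)` exists on `[a,b)` and extends to a continuous
function on all of `[a,b]`, then `f(b) = 0`. -/
theorem rightRL_blowup_of_ne_zero_at_right_endpoint
    (a b α : ℝ) (hab : a < b) (hα0 : 0 < α) (hα1 : α < 1)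
    (f : ℝ → ℝ) (hf : ContDiffOn ℝ 1 f (Set.Icc a b)) :
    (f b ≠ 0 →
      Filter.Tendsto (fun t => |rightRL b α f t|) (nhdsWithin b (Set.Iio b))
        Filter.atTop) ∧
    (∀ g : ℝ → ℝ,
      (∀ t ∈ Set.Ico a b,
        DifferentiableAt ℝ (fun s => ∫ τ in s..b, (τ - s) ^ (-α) * f τ) t) →
      ContinuousOn g (Set.Icc a b) →
      (∀ t ∈ Set.Ico a b, g t = rightRL b α f t) →
      f b = 0) := by
  obtain ⟨M, hM⟩ := isCompact_Icc.exists_bound_of_continuousOn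
    (hf.continuousOn_derivWithin (uniqueDiffOn_Icc hab) le_rfl)
  have hM0 : 0 ≤ M := le_trans (norm_nonneg _) (hM a ⟨le_rfl, le_of_lt hab⟩)
  have hΓ : 0 < Real.Gamma (1 - α) := Real.Gamma_pos_of_pos (by linarith)
  set c : ℝ := -1 / Real.Gamma (1 - α) with hc
  have hc0 : c ≠ 0 := div_ne_zero (by norm_num) (ne_of_gt hΓ)
  have hIoo : Set.Ioo a b ∈ nhdsWithin b (Set.Iio b) := by
    rw [mem_nhdsWithin]
    exact ⟨Set.Ioi a, isOpen_Ioi, hab, fun x hx => ⟨hx.1, hx.2⟩⟩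
  have main : f b ≠ 0 →
      Filter.Tendsto (fun t => |rightRL b α f t|) (nhdsWithin b (Set.Iio b))
        Filter.atTop := by
    intro hfb
    have heq : ∀ t ∈ Set.Ioo a b, |rightRL b α f t|
        = (b - t) ^ (-α) * (|c| * |(b - t) * Qaux a b α f t - (1 - α) * Paux b α f t|) := by
      intro t ht
      have hd := key_hasDerivAt a b α hab hα0 hα1 f hf ht
      have h1 : rightRL b α f t
          = c * ((b - t) ^ (-α) * ((b - t) * Qaux a b α f t - (1 - α) * Paux b α f t)) := by
        rw [rightRL, hd.deriv, hc]
      rw [h1, abs_mul, abs_mul,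
        abs_of_nonneg (Real.rpow_nonneg (by linarith [ht.2] : (0:ℝ) ≤ b - t) _)]
      ring
    -- (b - t) ^ (-α) → ∞
    have ha1 : Filter.Tendsto (fun t => b - t) (nhdsWithin b (Set.Iio b))
        (nhdsWithin 0 (Set.Ioi 0)) := by
      refine tendsto_nhdsWithin_of_tendsto_nhds_of_eventually_within _ ?_ ?_
      · have hcont : Continuous (fun t : ℝ => b - t) := continuous_const.sub continuous_id
        have := (hcont.tendsto b).mono_left (nhdsWithin_le_nhds (s := Set.Iio b))
        simpa using this
      · filter_upwards [self_mem_nhdsWithin] with t ht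
        exact sub_pos.2 (Set.mem_Iio.1 ht)
    have hb1 : Filter.Tendsto (fun x : ℝ => x ^ (-α)) (nhdsWithin 0 (Set.Ioi 0))
        Filter.atTop := by
      have h1 : Filter.Tendsto (fun x : ℝ => x ^ α) (nhdsWithin 0 (Set.Ioi 0))
          (nhdsWithin 0 (Set.Ioi 0)) := by
        refine tendsto_nhdsWithin_of_tendsto_nhds_of_eventually_within _ ?_ ?_
        · have := (Real.continuousAt_rpow_const 0 α (Or.inr (le_of_lt hα0))).tendsto.mono_left
            (nhdsWithin_le_nhds (s := Set.Ioi (0:ℝ)))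
          simpa [Real.zero_rpow (ne_of_gt hα0)] using this
        · filter_upwards [self_mem_nhdsWithin] with x hx
          exact Real.rpow_pos_of_pos hx α
      have h2 := tendsto_inv_nhdsGT_zero.comp h1
      refine h2.congr' ?_
      filter_upwards [self_mem_nhdsWithin] with x hx
      simp [Function.comp, Real.rpow_neg (le_of_lt hx)]
    have h1 : Filter.Tendsto (fun t => (b - t) ^ (-α)) (nhdsWithin b (Set.Iio b))
        Filter.atTop := hb1.comp ha1
    -- second factor
    have h2' : Filter.Tendsto
        (fun t => (b - t) * Qaux a b α f t - (1 - α) * Paux b α f t)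
        (nhdsWithin b (Set.Iio b)) (nhds (-f b)) := by
      have hsq : Filter.Tendsto
          (fun t => ((b - t) * Qaux a b α f t - (1 - α) * Paux b α f t) + f b)
          (nhdsWithin b (Set.Iio b)) (nhds 0) := by
        refine squeeze_zero_norm' (a := fun t => (b - t) * (M / (1 - α) + M)) ?_ ?_
        · filter_upwards [hIoo] with t ht
          have ht' : t ∈ Set.Ico a b := ⟨le_of_lt ht.1, ht.2⟩
          have hQ := Qaux_bound a b α M hab hα0 hα1 f hM ht'
          have hP := Paux_sub a b α M hab hα0 hα1 f hf hM ht'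
          have e : ((b - t) * Qaux a b α f t - (1 - α) * Paux b α f t) + f b
              = (b - t) * Qaux a b α f t
                - (1 - α) * (Paux b α f t - f b / (1 - α)) := by
            have h1a : (1:ℝ) - α ≠ 0 := by linarith
            rw [mul_sub, mul_div_cancel₀ _ h1a]
            ring
          rw [e]
          have hbt0 : (0:ℝ) ≤ b - t := by linarith [ht.2]
          calc ‖(b - t) * Qaux a b α f t
                - (1 - α) * (Paux b α f t - f b / (1 - α))‖
              ≤ ‖(b - t) * Qaux a b α f t‖
                + ‖(1 - α) * (Paux b α f t - f b / (1 - α))‖ := norm_sub_le _ _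
            _ ≤ (b - t) * (M / (1 - α)) + (1 - α) * (M * (b - t) / (1 - α)) := by
                rw [norm_mul, norm_mul, Real.norm_of_nonneg hbt0,
                  Real.norm_of_nonneg (by linarith : (0:ℝ) ≤ 1 - α)]
                exact add_le_add (mul_le_mul_of_nonneg_left hQ hbt0)
                  (mul_le_mul_of_nonneg_left hP (by linarith))
            _ ≤ (b - t) * (M / (1 - α) + M) := by
                have h1α : (1:ℝ) - α ≠ 0 := by linarith
                field_simp
                ring_nf
                nlinarith [hbt0, hM0]
        · have : Filter.Tendsto (fun t => b - t) (nhdsWithin b (Set.Iio b)) (nhds 0) := by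
            have hcont : Continuous (fun t : ℝ => b - t) := continuous_const.sub continuous_id
            have := (hcont.tendsto b).mono_left (nhdsWithin_le_nhds (s := Set.Iio b))
            simpa using this
          simpa using this.mul_const (M / (1 - α) + M)
      have := hsq.add_const (-f b)
      simp only [add_neg_cancel_right, zero_add] at this
      simpa using this
    have h2 : Filter.Tendsto
        (fun t => |c| * |(b - t) * Qaux a b α f t - (1 - α) * Paux b α f t|)
        (nhdsWithin b (Set.Iio b)) (nhds (|c| * |f b|)) := by
      have := (h2'.abs).const_mul |c|
      simpa using this
    have hpos : 0 < |c| * |f b| :=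
      mul_pos (abs_pos.2 hc0) (abs_pos.2 hfb)
    refine (h1.atTop_mul_pos hpos h2).congr' ?_
    filter_upwards [hIoo] with t ht
    exact (heq t ht).symm
  refine ⟨main, ?_⟩
  intro g _ hg hgeq
  by_contra hfb
  have hT := main hfb
  have hgt : Filter.Tendsto (fun t => |g t|) (nhdsWithin b (Set.Iio b)) (nhds |g b|) := by
    have hco : ContinuousWithinAt g (Set.Icc a b) b := hg b ⟨le_of_lt hab, le_rfl⟩
    have : Filter.Tendsto g (nhdsWithin b (Set.Iio b)) (nhds (g b)) := by
      rw [← nhdsWithin_Ico_eq_nhdsLT hab]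
      exact hco.mono_left (nhdsWithin_mono b Set.Ico_subset_Icc_self)
    exact this.abs
  have heq' : ∀ᶠ t in nhdsWithin b (Set.Iio b), |rightRL b α f t| = |g t| := by
    filter_upwards [hIoo] with t ht
    rw [hgeq t ⟨le_of_lt ht.1, ht.2⟩]
  exact not_tendsto_nhds_of_tendsto_atTop (hT.congr' heq') _ hgt
end

section
/- Let 0 < α < 1, k ∈ ℝ, ξ ∈ ℝ, and define y : [0,1] → ℝ by y(t) = ∫_0^t E_{1−α,1}(−k·(t−τ)^{1−α}) · ξ dτ. Then y(0) = 0, y is differentiable on (0,1], its left Riemann–Liouville fractional derivative ₀D_t^α y(t) exists for t ∈ (0,1], and y satisfies the fractional differential equation y'(t) + k · ₀D_t^α y(t) = ξ for all t ∈ (0,1]. -/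
open MeasureTheory intervalIntegral Set Filter

/-- The Mittag–Leffler function `E_{α,β}(z) = Σ_{n=0}^∞ zⁿ / Γ(αn + β)`. -/
noncomputable def mittagLeffler (α β z : ℝ) : ℝ :=
  ∑' n : ℕ, z ^ n / Real.Gamma (α * n + β)

lemma gamma_lb_aux (R : ℝ) (hR : 1 ≤ R) :
    ∃ c > 0, ∀ x : ℝ, 0 < x → c * R ^ x ≤ Real.Gamma x := by
  have hR0 : (0:ℝ) < R := lt_of_lt_of_le one_pos hR
  set X : ℝ := R + 2 with hX
  have hX1 : (1:ℝ) ≤ X + 1 := by simp [hX]; linarith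
  -- min of Gamma on [1, X+1]
  have hcont : ContinuousOn Real.Gamma (Icc 1 (X+1)) := by
    intro x hx
    have hx0 : (0:ℝ) < x := lt_of_lt_of_le one_pos hx.1
    have : DifferentiableAt ℝ Real.Gamma x := by
      apply Real.differentiableAt_Gamma
      intro m
      have : (0:ℝ) ≤ m := Nat.cast_nonneg m
      intro h; rw [h] at hx0; linarith
    exact this.continuousAt.continuousWithinAt
  obtain ⟨x₀, hx₀, hmin⟩ := isCompact_Icc.exists_isMinOn (nonempty_Icc.mpr hX1) hcont
  set m : ℝ := Real.Gamma x₀ with hm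
  have hm0 : 0 < m := Real.Gamma_pos_of_pos (lt_of_lt_of_le one_pos hx₀.1)
  -- lower bound on (0, X+1]
  have hlow : ∀ x : ℝ, 0 < x → x ≤ X + 1 → m ≤ Real.Gamma x := by
    intro x hx0 hx1
    rcases le_or_gt 1 x with h1 | h1
    · exact hmin ⟨h1, hx1⟩
    · have h2 : Real.Gamma (x+1) = x * Real.Gamma x := Real.Gamma_add_one hx0.ne'
      have h3 : m ≤ Real.Gamma (x+1) := by
        refine hmin ⟨by linarith, ?_⟩
        have : (1:ℝ) + 1 ≤ X + 1 := by simp [hX]; linarith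
        linarith
      have h4 : 0 < Real.Gamma x := Real.Gamma_pos_of_pos hx0
      nlinarith
  refine ⟨m / R ^ (X+1), by positivity, ?_⟩
  have key : ∀ n : ℕ, ∀ x : ℝ, 0 < x → x ≤ X + 1 + n →
      m / R ^ (X+1) * R ^ x ≤ Real.Gamma x := by
    intro n
    induction n with
    | zero =>
      intro x hx0 hx1
      have h1 : R ^ x ≤ R ^ (X+1) :=
        Real.rpow_le_rpow_of_exponent_le hR (by simpa using hx1)
      have h2 : (0:ℝ) < R ^ (X+1) := Real.rpow_pos_of_pos hR0 _
      calc m / R ^ (X+1) * R ^ x ≤ m / R ^ (X+1) * R ^ (X+1) := by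
            apply mul_le_mul_of_nonneg_left h1; positivity
        _ = m := by field_simp
        _ ≤ Real.Gamma x := hlow x hx0 (by simpa using hx1)
    | succ n ih =>
      intro x hx0 hx1
      rcases le_or_gt x (X + 1 + n) with h | h
      · exact ih x hx0 h
      · have hx1' : x - 1 ≤ X + 1 + n := by push_cast at hx1 ⊢; linarith
        have hx0' : 0 < x - 1 := by
          have : (0:ℝ) ≤ (n:ℝ) := Nat.cast_nonneg n
          simp only [hX] at h; linarith
        have hG := ih (x-1) hx0' hx1'
        have hrec : Real.Gamma x = (x - 1) * Real.Gamma (x-1) := by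
          have := Real.Gamma_add_one hx0'.ne'
          simpa using this
        have hRx : R ^ x = R ^ (x-1) * R := by
          rw [← Real.rpow_add_one hR0.ne' (x-1)]; ring_nf
        have hRle : R ≤ x - 1 := by
          have : (0:ℝ) ≤ (n:ℝ) := Nat.cast_nonneg n
          simp only [hX] at h; linarith
        have hG0 : 0 ≤ Real.Gamma (x-1) := (Real.Gamma_pos_of_pos hx0').le
        calc m / R ^ (X+1) * R ^ x = (m / R ^ (X+1) * R ^ (x-1)) * R := by rw [hRx]; ring
          _ ≤ Real.Gamma (x-1) * R := by apply mul_le_mul_of_nonneg_right hG; linarith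
          _ ≤ Real.Gamma (x-1) * (x-1) := by apply mul_le_mul_of_nonneg_left hRle hG0
          _ = Real.Gamma x := by rw [hrec]; ring
  intro x hx0
  refine key ⌈x⌉₊ x hx0 ?_
  have := Nat.le_ceil x
  have hX0 : (0:ℝ) ≤ X + 1 := by linarith
  linarith

lemma summable_gamma_aux (γ b C : ℝ) (hγ : 0 < γ) (hb : 0 < b) (hC : 0 ≤ C) :
    Summable (fun n : ℕ => (n + 1 : ℝ) * C ^ n / Real.Gamma (γ * n + b)) := by
  set R : ℝ := max 1 ((2*C) ^ (γ⁻¹)) with hRdef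
  have hR1 : (1:ℝ) ≤ R := le_max_left _ _
  have hR0 : (0:ℝ) < R := lt_of_lt_of_le one_pos hR1
  have h2C : 2 * C ≤ R ^ γ := by
    have h1 : ((2*C) ^ (γ⁻¹)) ^ γ ≤ R ^ γ :=
      Real.rpow_le_rpow (Real.rpow_nonneg (by linarith) _) (le_max_right _ _) hγ.le
    calc 2 * C = (2*C) ^ (γ⁻¹ * γ) := by
          rw [inv_mul_cancel₀ hγ.ne', Real.rpow_one]
      _ = ((2*C) ^ (γ⁻¹)) ^ γ := Real.rpow_mul (by linarith) _ _
      _ ≤ R ^ γ := h1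
  obtain ⟨c, hc0, hΓ⟩ := gamma_lb_aux R hR1
  have hRb : (0:ℝ) < R ^ b := Real.rpow_pos_of_pos hR0 _
  have hRγ : (0:ℝ) < R ^ γ := Real.rpow_pos_of_pos hR0 _
  have hsum : Summable (fun n : ℕ => ((n:ℝ) + 1) * (1/2) ^ n * (1 / (c * R ^ b))) := by
    apply Summable.mul_right
    have h1 : Summable (fun n : ℕ => (n:ℝ) * (1/2) ^ n) := by
      simpa using summable_pow_mul_geometric_of_norm_lt_one (R := ℝ) 1
        (r := (1/2:ℝ)) (by rw [Real.norm_eq_abs]; rw [abs_of_pos]; norm_num; norm_num)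
    have h2 : Summable (fun n : ℕ => ((1:ℝ)/2) ^ n) :=
      summable_geometric_of_lt_one (by norm_num) (by norm_num)
    simpa [add_mul] using h1.add h2
  refine Summable.of_nonneg_of_le (fun n => ?_) (fun n => ?_) hsum
  · have hΓ0 : 0 < Real.Gamma (γ * n + b) :=
      Real.Gamma_pos_of_pos (by positivity)
    positivity
  · have hx : (0:ℝ) < γ * n + b := by positivity
    have hΓ0 : 0 < Real.Gamma (γ * n + b) := Real.Gamma_pos_of_pos hx
    have hlb : c * (R ^ b * (R ^ γ) ^ n) ≤ Real.Gamma (γ * n + b) := by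
      have := hΓ (γ * n + b) hx
      have heq : R ^ (γ * n + b) = (R ^ γ) ^ n * R ^ b := by
        rw [Real.rpow_add hR0, Real.rpow_mul hR0.le, Real.rpow_natCast]
      rw [heq] at this; linarith [this]
    have hCn : C ^ n ≤ (R ^ γ) ^ n * (1/2) ^ n := by
      rw [← mul_pow]
      apply pow_le_pow_left₀ hC
      linarith
    have hden : (0:ℝ) < c * (R ^ b * (R ^ γ) ^ n) := by positivity
    calc ((n:ℝ) + 1) * C ^ n / Real.Gamma (γ * n + b)
        ≤ ((n:ℝ) + 1) * C ^ n / (c * (R ^ b * (R ^ γ) ^ n)) := by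
          apply div_le_div_of_nonneg_left _ hden hlb
          positivity
      _ ≤ ((n:ℝ) + 1) * ((R ^ γ) ^ n * (1/2) ^ n) / (c * (R ^ b * (R ^ γ) ^ n)) := by
          gcongr
      _ = ((n:ℝ) + 1) * (1/2) ^ n * (1 / (c * R ^ b)) := by
          field_simp

lemma summable_of_le_gamma {f : ℕ → ℝ} (γ b C K : ℝ) (hγ : 0 < γ) (hb : 0 < b) (hC : 0 ≤ C)
    (hsum : Summable (fun n : ℕ => (n + 1 : ℝ) * C ^ n / Real.Gamma (γ * n + b)))
    (hf : ∀ n : ℕ, ‖f n‖ ≤ K * ((n + 1 : ℝ) * C ^ n / Real.Gamma (γ * n + b))) :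
    Summable f :=
  Summable.of_norm (Summable.of_nonneg_of_le (fun n => norm_nonneg _) hf (hsum.mul_left K))

lemma real_beta {p q a : ℝ} (hp : 0 < p) (hq : 0 < q) (ha : 0 < a) :
    ∫ x in (0:ℝ)..a, x ^ (p - 1) * (a - x) ^ (q - 1) =
      Real.Gamma p * Real.Gamma q / Real.Gamma (p + q) * a ^ (p + q - 1) := by
  have hpq : (0:ℝ) < p + q := by linarith
  have hGpq : Real.Gamma (p + q) ≠ 0 := (Real.Gamma_pos_of_pos hpq).ne'
  have hsc := Complex.betaIntegral_scaled (p : ℂ) (q : ℂ) ha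
  have hgg := Complex.Gamma_mul_Gamma_eq_betaIntegral
    (show 0 < (p:ℂ).re by simpa using hp) (show 0 < (q:ℂ).re by simpa using hq)
  -- identify complex integral with real one
  have hI : (∫ x in (0:ℝ)..a, (x : ℂ) ^ ((p:ℂ) - 1) * ((a : ℂ) - x) ^ ((q:ℂ) - 1)) =
      ((∫ x in (0:ℝ)..a, x ^ (p - 1) * (a - x) ^ (q - 1) : ℝ) : ℂ) := by
    rw [← intervalIntegral.integral_ofReal]
    rw [intervalIntegral.integral_of_le ha.le, intervalIntegral.integral_of_le ha.le]
    apply setIntegral_congr_fun measurableSet_Ioc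
    intro x hx
    have hx0 : (0:ℝ) ≤ x := hx.1.le
    have hax : (0:ℝ) ≤ a - x := by linarith [hx.2]
    dsimp only
    rw [Complex.ofReal_mul, Complex.ofReal_cpow hx0, Complex.ofReal_cpow hax]
    push_cast
    ring
  have hb := hsc
  rw [hI] at hb
  -- betaIntegral value
  have hgg2 : ((Real.Gamma p : ℂ)) * (Real.Gamma q : ℂ) =
      ((Real.Gamma (p + q) : ℝ) : ℂ) * Complex.betaIntegral p q := by
    rw [← Complex.Gamma_ofReal, ← Complex.Gamma_ofReal, ← Complex.Gamma_ofReal]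
    convert hgg using 3
    push_cast; ring
  have hbeta : Complex.betaIntegral p q =
      ((Real.Gamma p * Real.Gamma q / Real.Gamma (p + q) : ℝ) : ℂ) := by
    have h1 : ((Real.Gamma (p + q) : ℝ) : ℂ) ≠ 0 := by exact_mod_cast hGpq
    rw [Complex.ofReal_div, Complex.ofReal_mul, eq_div_iff h1]
    linear_combination -1 * hgg2
  rw [hbeta] at hb
  have hpow : ((a:ℂ) ^ ((p:ℂ) + q - 1)) = ((a ^ (p + q - 1) : ℝ) : ℂ) := by
    rw [Complex.ofReal_cpow ha.le]
    push_cast; ring_nf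
  rw [hpow] at hb
  rw [← Complex.ofReal_mul] at hb
  have hreal : (∫ x in (0:ℝ)..a, x ^ (p - 1) * (a - x) ^ (q - 1)) =
      a ^ (p + q - 1) * (Real.Gamma p * Real.Gamma q / Real.Gamma (p + q)) := by
    exact_mod_cast hb
  rw [hreal]; ring

lemma Ibeta {γ s c : ℝ} (hγ : 0 < γ) (hs : 0 < s) (hc : 0 ≤ c) :
    ∫ τ in Ioc (0:ℝ) s, (s - τ) ^ (γ - 1) * τ ^ c =
      Real.Gamma (c + 1) * Real.Gamma γ / Real.Gamma (c + 1 + γ) * s ^ (c + γ) := by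
  have h := real_beta (p := c + 1) (q := γ) (a := s) (by linarith) hγ hs
  rw [← intervalIntegral.integral_of_le hs.le]
  have h2 : (∫ τ in (0:ℝ)..s, (s - τ) ^ (γ - 1) * τ ^ c) =
      ∫ x in (0:ℝ)..s, x ^ (c + 1 - 1) * (s - x) ^ (γ - 1) := by
    rw [intervalIntegral.integral_of_le hs.le, intervalIntegral.integral_of_le hs.le]
    apply setIntegral_congr_fun measurableSet_Ioc
    intro x hx
    rw [show c + 1 - 1 = c by ring]
    ring
  rw [h2, h, show c + 1 + γ - 1 = c + γ by ring]

lemma TD (γ d : ℝ) (hγ : 0 < γ) (hd : 1 ≤ d) (a : ℕ → ℝ)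
    (hu : Summable (fun n : ℕ => |a n| * (γ * n + d) * 2 ^ (γ * n + d)))
    {t : ℝ} (ht : t ∈ Ioo (0:ℝ) 2) :
    HasDerivAt (fun s : ℝ => ∑' n : ℕ, a n * s ^ (γ * n + d))
      (∑' n : ℕ, a n * ((γ * n + d) * t ^ (γ * n + d - 1))) t := by
  have he1 : ∀ n : ℕ, 1 ≤ γ * n + d := by
    intro n
    have : (0:ℝ) ≤ γ * n := by positivity
    linarith
  apply hasDerivAt_tsum_of_isPreconnected hu isOpen_Ioo isPreconnected_Ioo
    (g' := fun n s => a n * ((γ * n + d) * s ^ (γ * n + d - 1)))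
    (y₀ := 1) ?hg ?hg' (by norm_num) ?hg0 ht
  case hg =>
    intro n y hy
    exact (Real.hasDerivAt_rpow_const (Or.inl hy.1.ne')).const_mul (a n)
  case hg' =>
    intro n y hy
    have h1 : y ^ (γ * n + d - 1) ≤ 2 ^ (γ * n + d - 1) :=
      Real.rpow_le_rpow hy.1.le hy.2.le (by linarith [he1 n])
    have h2 : (2:ℝ) ^ (γ * n + d - 1) ≤ 2 ^ (γ * n + d) :=
      Real.rpow_le_rpow_of_exponent_le one_le_two (by linarith)
    have h3 : (0:ℝ) ≤ y ^ (γ * n + d - 1) := Real.rpow_nonneg hy.1.le _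
    rw [norm_mul, norm_mul, Real.norm_eq_abs, Real.norm_eq_abs, Real.norm_eq_abs,
      abs_of_nonneg (by linarith [he1 n] : (0:ℝ) ≤ γ * n + d), abs_of_nonneg h3]
    have h4 : (γ * n + d) * y ^ (γ * n + d - 1) ≤ (γ * n + d) * 2 ^ (γ * n + d) := by
      apply mul_le_mul_of_nonneg_left (le_trans h1 h2) (by linarith [he1 n])
    calc |a n| * ((γ * n + d) * y ^ (γ * n + d - 1))
        ≤ |a n| * ((γ * n + d) * 2 ^ (γ * n + d)) :=
          mul_le_mul_of_nonneg_left h4 (abs_nonneg _)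
      _ = |a n| * (γ * n + d) * 2 ^ (γ * n + d) := by ring
  case hg0 =>
    simp only [Real.one_rpow, mul_one]
    apply Summable.of_norm
    refine Summable.of_nonneg_of_le (fun n => norm_nonneg _) (fun n => ?_) hu
    have h2 : (1:ℝ) ≤ 2 ^ (γ * n + d) := by
      have := Real.rpow_le_rpow_of_exponent_le one_le_two
        (le_trans zero_le_one (he1 n))
      simpa using this
    rw [Real.norm_eq_abs]
    calc |a n| = |a n| * 1 * 1 := by ring
      _ ≤ |a n| * (γ * n + d) * 2 ^ (γ * n + d) := by
          apply mul_le_mul (mul_le_mul_of_nonneg_left (he1 n) (abs_nonneg _)) h2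
            zero_le_one
          positivity

lemma yser (γ k ξ : ℝ) (hγ0 : 0 < γ) (hγ1 : γ ≤ 1) {s : ℝ} (hs0 : 0 ≤ s) (hs2 : s ≤ 2) :
    (∫ τ in (0:ℝ)..s, mittagLeffler γ 1 (-k * (s - τ) ^ γ) * ξ) =
      ∑' n : ℕ, (ξ * (-k) ^ n / Real.Gamma (γ * n + 2)) * s ^ (γ * n + 1) := by
  have hgam : ∀ n : ℕ, (0:ℝ) < γ * n + 1 := fun n => by positivity
  have hΓpos : ∀ n : ℕ, 0 < Real.Gamma (γ * n + 1) :=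
    fun n => Real.Gamma_pos_of_pos (hgam n)
  -- change of variables
  have h1 : (∫ τ in (0:ℝ)..s, mittagLeffler γ 1 (-k * (s - τ) ^ γ) * ξ) =
      ∫ u in (0:ℝ)..s, mittagLeffler γ 1 (-k * u ^ γ) * ξ := by
    have := intervalIntegral.integral_comp_sub_left (a := 0) (b := s)
      (fun u => mittagLeffler γ 1 (-k * u ^ γ) * ξ) s
    simpa using this
  rw [h1, intervalIntegral.integral_of_le hs0]
  -- rewrite integrand as tsum
  have h2 : EqOn (fun u => mittagLeffler γ 1 (-k * u ^ γ) * ξ)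
      (fun u => ∑' n : ℕ, (ξ * (-k) ^ n / Real.Gamma (γ * n + 1)) * u ^ (γ * n))
      (Ioc (0:ℝ) s) := by
    intro u hu
    simp only [mittagLeffler]
    rw [← tsum_mul_right]
    congr 1; funext n
    have he : (-k * u ^ γ) ^ n = (-k) ^ n * u ^ (γ * n) := by
      rw [mul_pow, ← Real.rpow_natCast (u ^ γ) n, ← Real.rpow_mul hu.1.le]
    rw [he]; ring
  rw [setIntegral_congr_fun measurableSet_Ioc h2]
  -- integrability
  have hInt : ∀ n : ℕ, Integrable
      (fun u => (ξ * (-k) ^ n / Real.Gamma (γ * n + 1)) * u ^ (γ * n))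
      (volume.restrict (Ioc 0 s)) := by
    intro n
    have h : IntervalIntegrable (fun u : ℝ => u ^ (γ * n)) volume 0 s :=
      intervalIntegrable_rpow' (by linarith [hgam n])
    exact ((intervalIntegrable_iff_integrableOn_Ioc_of_le hs0).mp h).const_mul _
  -- value of the basic integral
  have hval : ∀ n : ℕ, (∫ u in Ioc (0:ℝ) s, u ^ (γ * n)) = s ^ (γ * n + 1) / (γ * n + 1) := by
    intro n
    rw [← intervalIntegral.integral_of_le hs0,
      integral_rpow (Or.inl (by linarith [hgam n] : (-1:ℝ) < γ * n))]
    rw [Real.zero_rpow (hgam n).ne']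
    ring
  -- norm integrals
  have hnorm : ∀ n : ℕ, (∫ u in Ioc (0:ℝ) s,
      ‖(ξ * (-k) ^ n / Real.Gamma (γ * n + 1)) * u ^ (γ * n)‖) =
      |ξ| * |k| ^ n / Real.Gamma (γ * n + 1) * (s ^ (γ * n + 1) / (γ * n + 1)) := by
    intro n
    have heq : EqOn (fun u => ‖(ξ * (-k) ^ n / Real.Gamma (γ * n + 1)) * u ^ (γ * n)‖)
        (fun u => (|ξ| * |k| ^ n / Real.Gamma (γ * n + 1)) * u ^ (γ * n)) (Ioc (0:ℝ) s) := by
      intro u hu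
      simp only [Real.norm_eq_abs, abs_mul, abs_div, abs_pow, abs_neg,
        abs_of_nonneg (Real.rpow_nonneg hu.1.le _),
        abs_of_pos (hΓpos n)]
    rw [setIntegral_congr_fun measurableSet_Ioc heq, MeasureTheory.integral_const_mul, hval n]
  have hSum : Summable (fun n : ℕ => ∫ u in Ioc (0:ℝ) s,
      ‖(ξ * (-k) ^ n / Real.Gamma (γ * n + 1)) * u ^ (γ * n)‖) := by
    apply summable_of_le_gamma γ 1 (|k| * 2 ^ γ) (2 * |ξ|) hγ0 one_pos (by positivity)
      (summable_gamma_aux γ 1 _ hγ0 one_pos (by positivity))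
    intro n
    rw [Real.norm_eq_abs, hnorm n, abs_of_nonneg (by positivity)]
    have hsle : s ^ (γ * n + 1) ≤ 2 * (2 ^ γ) ^ n := by
      calc s ^ (γ * n + 1) ≤ 2 ^ (γ * n + 1) :=
            Real.rpow_le_rpow hs0 hs2 (hgam n).le
        _ = 2 ^ (γ * n) * 2 := by
            rw [Real.rpow_add (by norm_num : (0:ℝ) < 2), Real.rpow_one]
        _ = 2 * (2 ^ γ) ^ n := by
            rw [Real.rpow_mul (by norm_num : (0:ℝ) ≤ 2), Real.rpow_natCast]; ring
    have hinv : s ^ (γ * n + 1) / (γ * n + 1) ≤ 2 * (2 ^ γ) ^ n := by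
      calc s ^ (γ * n + 1) / (γ * n + 1) ≤ s ^ (γ * n + 1) / 1 := by
            apply div_le_div_of_nonneg_left (Real.rpow_nonneg hs0 _) one_pos
            have : (0:ℝ) ≤ γ * n := by positivity
            linarith
        _ = s ^ (γ * n + 1) := by ring
        _ ≤ 2 * (2 ^ γ) ^ n := hsle
    calc |ξ| * |k| ^ n / Real.Gamma (γ * n + 1) * (s ^ (γ * n + 1) / (γ * n + 1))
        ≤ |ξ| * |k| ^ n / Real.Gamma (γ * n + 1) * (2 * (2 ^ γ) ^ n) := by
          apply mul_le_mul_of_nonneg_left hinv (by positivity)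
      _ = 2 * |ξ| * ((|k| * 2 ^ γ) ^ n / Real.Gamma (γ * n + 1)) := by
          rw [mul_pow]; ring
      _ ≤ 2 * |ξ| * ((n + 1 : ℝ) * (|k| * 2 ^ γ) ^ n / Real.Gamma (γ * n + 1)) := by
          have hx : (|k| * 2 ^ γ) ^ n ≤ (n + 1 : ℝ) * (|k| * 2 ^ γ) ^ n := by
            nlinarith [pow_nonneg (by positivity : (0:ℝ) ≤ |k| * 2 ^ γ) n,
              (Nat.cast_nonneg n : (0:ℝ) ≤ n)]
          exact mul_le_mul_of_nonneg_left
            (div_le_div_of_nonneg_right hx (hΓpos n).le) (by positivity)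
  rw [← MeasureTheory.integral_tsum_of_summable_integral_norm hInt hSum]
  congr 1; funext n
  rw [MeasureTheory.integral_const_mul, hval n]
  have hne : Real.Gamma (γ * n + 1) ≠ 0 := (hΓpos n).ne'
  have hrec : Real.Gamma (γ * n + 2) = (γ * n + 1) * Real.Gamma (γ * n + 1) := by
    rw [show γ * n + 2 = (γ * n + 1) + 1 by ring, Real.Gamma_add_one (hgam n).ne']
  rw [hrec]
  field_simp

lemma Fser (γ k ξ : ℝ) (y : ℝ → ℝ) (hγ0 : 0 < γ) (hγ1 : γ ≤ 1)
    (hrep : ∀ τ, 0 ≤ τ → τ ≤ 2 →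
      y τ = ∑' n : ℕ, (ξ * (-k) ^ n / Real.Gamma (γ * n + 2)) * τ ^ (γ * n + 1))
    {s : ℝ} (hs0 : 0 < s) (hs2 : s ≤ 2) :
    (∫ τ in (0:ℝ)..s, (s - τ) ^ (γ - 1) * y τ) =
      ∑' n : ℕ, (ξ * Real.Gamma γ * (-k) ^ n / Real.Gamma (γ * n + (γ + 2))) *
        s ^ (γ * n + (γ + 1)) := by
  have hgam : ∀ n : ℕ, (0:ℝ) < γ * n + 1 := fun n => by positivity
  have hΓ2 : ∀ n : ℕ, 0 < Real.Gamma (γ * n + 2) :=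
    fun n => Real.Gamma_pos_of_pos (by positivity)
  set A : ℕ → ℝ := fun n => ξ * (-k) ^ n / Real.Gamma (γ * n + 2) with hA
  set f : ℕ → ℝ → ℝ := fun n τ => (s - τ) ^ (γ - 1) * (A n * τ ^ (γ * n + 1)) with hf
  rw [intervalIntegral.integral_of_le hs0.le]
  have h2 : EqOn (fun τ => (s - τ) ^ (γ - 1) * y τ)
      (fun τ => ∑' n : ℕ, f n τ) (Ioc (0:ℝ) s) := by
    intro τ hτ
    simp only [hf]
    rw [hrep τ hτ.1.le (le_trans hτ.2 hs2), tsum_mul_left]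
  rw [setIntegral_congr_fun measurableSet_Ioc h2]
  -- integrability of the kernel
  have hker : IntegrableOn (fun τ => (s - τ) ^ (γ - 1)) (Ioc (0:ℝ) s) := by
    have h : IntervalIntegrable (fun x : ℝ => x ^ (γ - 1)) volume 0 s :=
      intervalIntegrable_rpow' (by linarith)
    have h2 := (h.comp_sub_left s).symm
    simp only [sub_zero, sub_self] at h2
    exact (intervalIntegrable_iff_integrableOn_Ioc_of_le hs0.le).mp h2
  have hmeas : ∀ n : ℕ, AEStronglyMeasurable (f n) (volume.restrict (Ioc 0 s)) := by
    intro n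
    apply Measurable.aestronglyMeasurable
    exact ((measurable_const.sub measurable_id).pow measurable_const).mul
      ((measurable_id.pow measurable_const).const_mul _)
  have hbnd : ∀ n : ℕ, ∀ τ ∈ Ioc (0:ℝ) s,
      ‖f n τ‖ ≤ |A n| * s ^ (γ * n + 1) * (s - τ) ^ (γ - 1) := by
    intro n τ hτ
    have h1 : (0:ℝ) ≤ s - τ := by linarith [hτ.2]
    have h3 : τ ^ (γ * n + 1) ≤ s ^ (γ * n + 1) :=
      Real.rpow_le_rpow hτ.1.le hτ.2 (hgam n).le
    have h4 : (0:ℝ) ≤ τ ^ (γ * n + 1) := Real.rpow_nonneg hτ.1.le _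
    simp only [hf, norm_mul, Real.norm_eq_abs, abs_mul,
      abs_of_nonneg (Real.rpow_nonneg h1 (γ - 1)), abs_of_nonneg h4]
    calc (s - τ) ^ (γ - 1) * (|A n| * τ ^ (γ * n + 1))
        ≤ (s - τ) ^ (γ - 1) * (|A n| * s ^ (γ * n + 1)) := by
          apply mul_le_mul_of_nonneg_left _ (Real.rpow_nonneg h1 _)
          exact mul_le_mul_of_nonneg_left h3 (abs_nonneg _)
      _ = |A n| * s ^ (γ * n + 1) * (s - τ) ^ (γ - 1) := by ring
  have hInt : ∀ n : ℕ, Integrable (f n) (volume.restrict (Ioc 0 s)) := by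
    intro n
    apply Integrable.mono' (hker.const_mul (|A n| * s ^ (γ * n + 1))) (hmeas n)
    rw [ae_restrict_iff' measurableSet_Ioc]
    exact Eventually.of_forall (hbnd n)
  -- norm integrals
  have hIb : ∀ n : ℕ, (∫ τ in Ioc (0:ℝ) s, (s - τ) ^ (γ - 1) * τ ^ (γ * n + 1)) =
      Real.Gamma (γ * n + 2) * Real.Gamma γ / Real.Gamma (γ * n + (γ + 2)) *
        s ^ (γ * n + (γ + 1)) := by
    intro n
    have := Ibeta (c := γ * n + 1) hγ0 hs0 (by positivity)
    rw [show γ * n + 1 + 1 + γ = γ * n + (γ + 2) by ring,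
      show γ * n + 1 + γ = γ * n + (γ + 1) by ring,
      show γ * n + 1 + 1 = γ * n + 2 by ring] at this
    exact this
  have hnorm : ∀ n : ℕ, (∫ τ in Ioc (0:ℝ) s, ‖f n τ‖) =
      |A n| * (Real.Gamma (γ * n + 2) * Real.Gamma γ / Real.Gamma (γ * n + (γ + 2)) *
        s ^ (γ * n + (γ + 1))) := by
    intro n
    have heq : EqOn (fun τ => ‖f n τ‖)
        (fun τ => |A n| * ((s - τ) ^ (γ - 1) * τ ^ (γ * n + 1))) (Ioc (0:ℝ) s) := by
      intro τ hτ
      have h1 : (0:ℝ) ≤ s - τ := by linarith [hτ.2]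
      simp only [hf, norm_mul, Real.norm_eq_abs, abs_mul,
        abs_of_nonneg (Real.rpow_nonneg h1 (γ - 1)),
        abs_of_nonneg (Real.rpow_nonneg hτ.1.le (γ * n + 1))]
      ring
    rw [setIntegral_congr_fun measurableSet_Ioc heq, MeasureTheory.integral_const_mul, hIb n]
  have hΓγ : 0 < Real.Gamma γ := Real.Gamma_pos_of_pos hγ0
  have hSum : Summable (fun n : ℕ => ∫ τ in Ioc (0:ℝ) s, ‖f n τ‖) := by
    apply summable_of_le_gamma γ (γ + 2) (|k| * 2 ^ γ) (4 * Real.Gamma γ * |ξ|) hγ0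
      (by linarith) (by positivity)
      (summable_gamma_aux γ (γ + 2) _ hγ0 (by linarith) (by positivity))
    intro n
    rw [Real.norm_eq_abs, hnorm n, abs_of_nonneg]; swap
    · have := (hΓ2 n).le
      have h5 : 0 < Real.Gamma (γ * n + (γ + 2)) := Real.Gamma_pos_of_pos (by positivity)
      positivity
    have hAn : |A n| = |ξ| * |k| ^ n / Real.Gamma (γ * n + 2) := by
      rw [hA]
      rw [abs_div, abs_mul, abs_pow, abs_neg, abs_of_pos (hΓ2 n)]
    have h5 : 0 < Real.Gamma (γ * n + (γ + 2)) := Real.Gamma_pos_of_pos (by positivity)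
    have hspow : s ^ (γ * n + (γ + 1)) ≤ 4 * (2 ^ γ) ^ n := by
      calc s ^ (γ * n + (γ + 1)) ≤ 2 ^ (γ * n + (γ + 1)) :=
            Real.rpow_le_rpow hs0.le hs2 (by positivity)
        _ ≤ 2 ^ (γ * n + 2) := Real.rpow_le_rpow_of_exponent_le one_le_two (by linarith)
        _ = (2 ^ γ) ^ n * 4 := by
            have h24 : (2:ℝ) ^ (2:ℝ) = 4 := by
              have h := Real.rpow_natCast (2:ℝ) 2
              norm_num at h
              linarith
            rw [Real.rpow_add (by norm_num : (0:ℝ) < 2),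
              Real.rpow_mul (by norm_num : (0:ℝ) ≤ 2), Real.rpow_natCast, h24]
        _ = 4 * (2 ^ γ) ^ n := by ring
    rw [hAn]
    have key : |ξ| * |k| ^ n / Real.Gamma (γ * n + 2) *
        (Real.Gamma (γ * n + 2) * Real.Gamma γ / Real.Gamma (γ * n + (γ + 2)) *
          s ^ (γ * n + (γ + 1))) =
        |ξ| * |k| ^ n * Real.Gamma γ * s ^ (γ * n + (γ + 1)) /
          Real.Gamma (γ * n + (γ + 2)) := by
      field_simp
    rw [key]
    calc |ξ| * |k| ^ n * Real.Gamma γ * s ^ (γ * n + (γ + 1)) /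
          Real.Gamma (γ * n + (γ + 2))
        ≤ |ξ| * |k| ^ n * Real.Gamma γ * (4 * (2 ^ γ) ^ n) /
          Real.Gamma (γ * n + (γ + 2)) := by
          apply div_le_div_of_nonneg_right _ h5.le
          apply mul_le_mul_of_nonneg_left hspow (by positivity)
      _ = 4 * Real.Gamma γ * |ξ| * ((|k| * 2 ^ γ) ^ n / Real.Gamma (γ * n + (γ + 2))) := by
          rw [mul_pow]; ring
      _ ≤ 4 * Real.Gamma γ * |ξ| *
          ((n + 1 : ℝ) * (|k| * 2 ^ γ) ^ n / Real.Gamma (γ * n + (γ + 2))) := by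
          apply mul_le_mul_of_nonneg_left _ (by positivity)
          apply div_le_div_of_nonneg_right _ h5.le
          nlinarith [pow_nonneg (by positivity : (0:ℝ) ≤ |k| * 2 ^ γ) n,
            (Nat.cast_nonneg n : (0:ℝ) ≤ n)]
  rw [← MeasureTheory.integral_tsum_of_summable_integral_norm hInt hSum]
  congr 1; funext n
  have : (∫ τ in Ioc (0:ℝ) s, f n τ) =
      A n * ∫ τ in Ioc (0:ℝ) s, (s - τ) ^ (γ - 1) * τ ^ (γ * n + 1) := by
    rw [← MeasureTheory.integral_const_mul]
    apply setIntegral_congr_fun measurableSet_Ioc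
    intro τ hτ
    simp only [hf]; ring
  rw [this, hIb n, hA]
  field_simp

/-- The function `y(t) = ∫_0^t E_{1−α,1}(−k (t−τ)^{1−α}) ξ dτ` satisfies `y(0) = 0`,
is differentiable on `(0,1]`, its left Riemann–Liouville fractional derivative
`₀D_t^α y` exists there, and solves `y'(t) + k ₀D_t^α y(t) = ξ` on `(0,1]`. -/
theorem mittagLeffler_solves_fractional_ode
    (α k ξ : ℝ) (hα0 : 0 < α) (hα1 : α < 1)
    (y : ℝ → ℝ)
    (hy : ∀ t, y t =
      ∫ τ in (0:ℝ)..t, mittagLeffler (1 - α) 1 (-k * (t - τ) ^ (1 - α)) * ξ) :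
    y 0 = 0 ∧
    (∀ t ∈ Set.Ioc (0:ℝ) 1, DifferentiableAt ℝ y t) ∧
    (∀ t ∈ Set.Ioc (0:ℝ) 1,
      DifferentiableAt ℝ (fun s => ∫ τ in (0:ℝ)..s, (s - τ) ^ (-α) * y τ) t) ∧
    (∀ t ∈ Set.Ioc (0:ℝ) 1, deriv y t + k * leftRL 0 α y t = ξ) := by
  have hγ0 : (0:ℝ) < 1 - α := by linarith
  have hγ1 : (1:ℝ) - α ≤ 1 := by linarith
  have hΓγ : (0:ℝ) < Real.Gamma (1 - α) := Real.Gamma_pos_of_pos hγ0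
  set A : ℕ → ℝ := fun n => ξ * (-k) ^ n / Real.Gamma ((1 - α) * n + 2) with hA
  set B : ℕ → ℝ := fun n =>
    ξ * Real.Gamma (1 - α) * (-k) ^ n / Real.Gamma ((1 - α) * n + ((1 - α) + 2)) with hB
  have hyrep : ∀ s : ℝ, 0 ≤ s → s ≤ 2 →
      y s = ∑' n : ℕ, A n * s ^ ((1 - α) * n + 1) := fun s h1 h2 =>
    (hy s).trans (yser (1 - α) k ξ hγ0 hγ1 h1 h2)
  -- summability input for TD (y)
  have huy : Summable (fun n : ℕ => |A n| * ((1 - α) * n + 1) * 2 ^ ((1 - α) * n + 1)) := by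
    apply summable_of_le_gamma (1 - α) 2 (|k| * 2 ^ (1 - α)) (2 * |ξ|) hγ0 two_pos
      (by positivity) (summable_gamma_aux _ 2 _ hγ0 two_pos (by positivity))
    intro n
    have hΓ2 : 0 < Real.Gamma ((1 - α) * n + 2) := Real.Gamma_pos_of_pos (by positivity)
    have hAn : |A n| = |ξ| * |k| ^ n / Real.Gamma ((1 - α) * n + 2) := by
      rw [hA, abs_div, abs_mul, abs_pow, abs_neg, abs_of_pos hΓ2]
    have h2p : (2:ℝ) ^ ((1 - α) * n + 1) = 2 * (2 ^ (1 - α)) ^ n := by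
      rw [Real.rpow_add (by norm_num : (0:ℝ) < 2), Real.rpow_one,
        Real.rpow_mul (by norm_num : (0:ℝ) ≤ 2), Real.rpow_natCast]
      ring
    have hle : ((1 - α) * n + 1) ≤ (n + 1 : ℝ) := by
      have h1 : ((1 - α) * n) ≤ (n:ℝ) := by
        nlinarith [(Nat.cast_nonneg n : (0:ℝ) ≤ n)]
      linarith
    rw [Real.norm_eq_abs, abs_of_nonneg (by positivity), hAn, h2p]
    calc |ξ| * |k| ^ n / Real.Gamma ((1 - α) * n + 2) * ((1 - α) * n + 1) *
          (2 * (2 ^ (1 - α)) ^ n)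
        ≤ |ξ| * |k| ^ n / Real.Gamma ((1 - α) * n + 2) * (n + 1 : ℝ) *
          (2 * (2 ^ (1 - α)) ^ n) := by
          apply mul_le_mul_of_nonneg_right (mul_le_mul_of_nonneg_left hle (by positivity))
            (by positivity)
      _ = 2 * |ξ| * ((n + 1 : ℝ) * (|k| * 2 ^ (1 - α)) ^ n /
            Real.Gamma ((1 - α) * n + 2)) := by rw [mul_pow]; ring
  -- summability input for TD (F)
  have huF : Summable (fun n : ℕ =>
      |B n| * ((1 - α) * n + ((1 - α) + 1)) * 2 ^ ((1 - α) * n + ((1 - α) + 1))) := by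
    apply summable_of_le_gamma (1 - α) ((1 - α) + 2) (|k| * 2 ^ (1 - α))
      (8 * Real.Gamma (1 - α) * |ξ|) hγ0 (by linarith) (by positivity)
      (summable_gamma_aux _ _ _ hγ0 (by linarith) (by positivity))
    intro n
    have hΓ2 : 0 < Real.Gamma ((1 - α) * n + ((1 - α) + 2)) :=
      Real.Gamma_pos_of_pos (by positivity)
    have hBn : |B n| = |ξ| * Real.Gamma (1 - α) * |k| ^ n /
        Real.Gamma ((1 - α) * n + ((1 - α) + 2)) := by
      rw [hB, abs_div, abs_mul, abs_mul, abs_pow, abs_neg, abs_of_pos hΓ2, abs_of_pos hΓγ]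
    have h2p : (2:ℝ) ^ ((1 - α) * n + ((1 - α) + 1)) ≤ 4 * (2 ^ (1 - α)) ^ n := by
      have h24 : (2:ℝ) ^ (2:ℝ) = 4 := by
        have h := Real.rpow_natCast (2:ℝ) 2
        norm_num at h
        linarith
      calc (2:ℝ) ^ ((1 - α) * n + ((1 - α) + 1))
          ≤ (2:ℝ) ^ ((1 - α) * n + 2) :=
            Real.rpow_le_rpow_of_exponent_le one_le_two (by linarith)
        _ = 4 * (2 ^ (1 - α)) ^ n := by
            rw [Real.rpow_add (by norm_num : (0:ℝ) < 2),
              Real.rpow_mul (by norm_num : (0:ℝ) ≤ 2), Real.rpow_natCast, h24]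
            ring
    have hle : ((1 - α) * n + ((1 - α) + 1)) ≤ 2 * (n + 1 : ℝ) := by
      have h1 : ((1 - α) * n) ≤ (n:ℝ) := by
        nlinarith [(Nat.cast_nonneg n : (0:ℝ) ≤ n)]
      linarith
    rw [Real.norm_eq_abs, abs_of_nonneg (by positivity), hBn]
    calc |ξ| * Real.Gamma (1 - α) * |k| ^ n / Real.Gamma ((1 - α) * n + ((1 - α) + 2)) *
          ((1 - α) * n + ((1 - α) + 1)) * 2 ^ ((1 - α) * n + ((1 - α) + 1))
        ≤ |ξ| * Real.Gamma (1 - α) * |k| ^ n / Real.Gamma ((1 - α) * n + ((1 - α) + 2)) *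
          (2 * (n + 1 : ℝ)) * (4 * (2 ^ (1 - α)) ^ n) := by
          apply mul_le_mul (mul_le_mul_of_nonneg_left hle (by positivity)) h2p
            (by positivity) (by positivity)
      _ = 8 * Real.Gamma (1 - α) * |ξ| * ((n + 1 : ℝ) * (|k| * 2 ^ (1 - α)) ^ n /
            Real.Gamma ((1 - α) * n + ((1 - α) + 2))) := by rw [mul_pow]; ring
  -- derivative of y
  have hyD : ∀ t ∈ Ioo (0:ℝ) 2, HasDerivAt y
      (∑' n : ℕ, A n * (((1 - α) * n + 1) * t ^ ((1 - α) * n + 1 - 1))) t := by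
    intro t ht
    have h := TD (1 - α) 1 hγ0 le_rfl A huy ht
    apply h.congr_of_eventuallyEq
    apply Filter.eventuallyEq_of_mem (isOpen_Ioo.mem_nhds ht)
    intro s hs
    exact hyrep s hs.1.le hs.2.le
  -- derivative of F
  have hFrep : ∀ s ∈ Ioo (0:ℝ) 2,
      (∫ τ in (0:ℝ)..s, (s - τ) ^ (-α) * y τ) =
        ∑' n : ℕ, B n * s ^ ((1 - α) * n + ((1 - α) + 1)) := by
    intro s hs
    have h1 : (∫ τ in (0:ℝ)..s, (s - τ) ^ (-α) * y τ) =
        ∫ τ in (0:ℝ)..s, (s - τ) ^ ((1 - α) - 1) * y τ := by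
      rw [show (1 - α) - 1 = -α by ring]
    rw [h1]
    exact Fser (1 - α) k ξ y hγ0 hγ1 hyrep hs.1 hs.2.le
  have hFD : ∀ t ∈ Ioo (0:ℝ) 2,
      HasDerivAt (fun s => ∫ τ in (0:ℝ)..s, (s - τ) ^ (-α) * y τ)
        (∑' n : ℕ, B n * (((1 - α) * n + ((1 - α) + 1)) *
          t ^ ((1 - α) * n + ((1 - α) + 1) - 1))) t := by
    intro t ht
    have h := TD (1 - α) ((1 - α) + 1) hγ0 (by linarith) B huF ht
    apply h.congr_of_eventuallyEq
    apply Filter.eventuallyEq_of_mem (isOpen_Ioo.mem_nhds ht)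
    intro s hs
    exact hFrep s hs
  have hmem : ∀ t ∈ Set.Ioc (0:ℝ) 1, t ∈ Ioo (0:ℝ) 2 :=
    fun t ht => ⟨ht.1, by linarith [ht.2]⟩
  refine ⟨?_, ?_, ?_, ?_⟩
  · rw [hy 0]
    simp
  · exact fun t ht => ((hyD t (hmem t ht))).differentiableAt
  · exact fun t ht => ((hFD t (hmem t ht))).differentiableAt
  · intro t ht
    have htI := hmem t ht
    set u : ℕ → ℝ := fun n =>
      ξ * (-k) ^ n * t ^ ((1 - α) * n) / Real.Gamma ((1 - α) * n + 1) with hu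
    have hΓ1 : ∀ n : ℕ, (0:ℝ) < (1 - α) * n + 1 := fun n => by positivity
    have hΓ1p : ∀ n : ℕ, 0 < Real.Gamma ((1 - α) * n + 1) :=
      fun n => Real.Gamma_pos_of_pos (hΓ1 n)
    have hsum_u : Summable u := by
      apply summable_of_le_gamma (1 - α) 1 (|k| * 2 ^ (1 - α)) |ξ| hγ0 one_pos
        (by positivity) (summable_gamma_aux _ 1 _ hγ0 one_pos (by positivity))
      intro n
      have htpow : t ^ ((1 - α) * n) ≤ (2 ^ (1 - α)) ^ n := by
        calc t ^ ((1 - α) * n) ≤ 2 ^ ((1 - α) * n) :=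
              Real.rpow_le_rpow htI.1.le htI.2.le (by positivity)
          _ = (2 ^ (1 - α)) ^ n := by
              rw [Real.rpow_mul (by norm_num : (0:ℝ) ≤ 2), Real.rpow_natCast]
      have htp0 : (0:ℝ) ≤ t ^ ((1 - α) * n) := Real.rpow_nonneg htI.1.le _
      rw [hu, Real.norm_eq_abs, abs_div, abs_mul, abs_mul, abs_pow, abs_neg,
        abs_of_pos (hΓ1p n), abs_of_nonneg htp0]
      calc |ξ| * |k| ^ n * t ^ ((1 - α) * n) / Real.Gamma ((1 - α) * n + 1)
          ≤ |ξ| * |k| ^ n * (2 ^ (1 - α)) ^ n / Real.Gamma ((1 - α) * n + 1) := by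
            apply div_le_div_of_nonneg_right _ (hΓ1p n).le
            exact mul_le_mul_of_nonneg_left htpow (by positivity)
        _ = |ξ| * ((|k| * 2 ^ (1 - α)) ^ n / Real.Gamma ((1 - α) * n + 1)) := by
            rw [mul_pow]; ring
        _ ≤ |ξ| * ((n + 1 : ℝ) * (|k| * 2 ^ (1 - α)) ^ n / Real.Gamma ((1 - α) * n + 1)) := by
            apply mul_le_mul_of_nonneg_left _ (abs_nonneg _)
            apply div_le_div_of_nonneg_right _ (hΓ1p n).le
            nlinarith [pow_nonneg (by positivity : (0:ℝ) ≤ |k| * 2 ^ (1 - α)) n,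
              (Nat.cast_nonneg n : (0:ℝ) ≤ n)]
    -- identify deriv y
    have hDy : deriv y t = ∑' n : ℕ, u n := by
      rw [(hyD t htI).deriv]
      congr 1; funext n
      have hrec : Real.Gamma ((1 - α) * n + 2) =
          ((1 - α) * n + 1) * Real.Gamma ((1 - α) * n + 1) := by
        rw [show (1 - α) * n + 2 = ((1 - α) * n + 1) + 1 by ring,
          Real.Gamma_add_one (hΓ1 n).ne']
      simp only [hA, hu]
      rw [show (1 - α) * n + 1 - 1 = (1 - α) * n by ring, hrec]
      field_simp
    -- identify k * leftRL
    have hDF : k * leftRL 0 α y t = -∑' n : ℕ, u (n + 1) := by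
      rw [leftRL, (hFD t htI).deriv, ← tsum_mul_left, ← tsum_mul_left, ← tsum_neg]
      congr 1; funext n
      have hp : (0:ℝ) < (1 - α) * n + ((1 - α) + 1) := by positivity
      have hrec : Real.Gamma ((1 - α) * n + ((1 - α) + 2)) =
          ((1 - α) * n + ((1 - α) + 1)) * Real.Gamma ((1 - α) * n + ((1 - α) + 1)) := by
        rw [show (1 - α) * n + ((1 - α) + 2) = ((1 - α) * n + ((1 - α) + 1)) + 1 by ring,
          Real.Gamma_add_one hp.ne']
      have hcast : ((1 - α) * ((n:ℝ) + 1)) = (1 - α) * n + (1 - α) := by ring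
      simp only [hB, hu]
      rw [hrec]
      push_cast
      rw [show (1 - α) * ((n:ℝ) + 1) + 1 = (1 - α) * n + ((1 - α) + 1) by ring,
        show (1 - α) * ((n:ℝ) + 1) = (1 - α) * n + (1 - α) by ring,
        show (1 - α) * n + ((1 - α) + 1) - 1 = (1 - α) * n + (1 - α) by ring]
      have hΓp : 0 < Real.Gamma ((1 - α) * n + ((1 - α) + 1)) :=
        Real.Gamma_pos_of_pos hp
      field_simp
      ring
    rw [hDy, hDF, Summable.tsum_eq_zero_add hsum_u]
    have hu0 : u 0 = ξ := by
      simp only [hu, Nat.cast_zero, mul_zero, pow_zero, Real.rpow_zero, zero_add,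
        Real.Gamma_one]
      ring
    rw [hu0]
    ring
end

section
/- Let ξ ∈ ℝ and k ∈ ℝ with |k| < 1, and for α ∈ (0,1) define y_α(t) = ∫_0^t E_{1−α,1}(−k·(t−τ)^{1−α}) · ξ dτ for t ∈ [0,1]. Then for every fixed t ∈ (0,1], the limit as α → 1⁻ of y_α(t) equals ξ·t/(k+1), the minimizer of the limiting classical problem min ∫_0^1 (k+1)² y'(t)² dt subject to y(0) = 0, y(1) = ξ/(k+1). -/
open MeasureTheory intervalIntegral Set Filter Topology

lemma aux_gamma_lb {x : ℝ} (hx : 1 ≤ x) :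
    Real.exp (-1) - Real.exp (-2) ≤ Real.Gamma x := by
  have hx0 : (0:ℝ) < x := by linarith
  rw [Real.Gamma_eq_integral hx0]
  have hInt : IntegrableOn (fun u : ℝ => Real.exp (-u) * u ^ (x - 1)) (Ioi 0) :=
    Real.GammaIntegral_convergent hx0
  have e1 : (∫ u in Set.Ioc (1:ℝ) 2, Real.exp (-u)) = Real.exp (-1) - Real.exp (-2) := by
    rw [← intervalIntegral.integral_of_le (by norm_num : (1:ℝ) ≤ 2)]
    rw [intervalIntegral.integral_comp_neg (fun u => Real.exp u)]
    rw [integral_exp]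
  have mono1 : (∫ u in Set.Ioc (1:ℝ) 2, Real.exp (-u)) ≤
      ∫ u in Set.Ioc (1:ℝ) 2, Real.exp (-u) * u ^ (x - 1) := by
    apply setIntegral_mono_on
    · exact (Real.continuous_exp.comp continuous_neg).integrableOn_Ioc
    · exact hInt.mono_set (fun u hu => lt_trans one_pos hu.1)
    · exact measurableSet_Ioc
    · intro u hu
      have h1u : (1:ℝ) ≤ u := hu.1.le
      nth_rewrite 1 [← mul_one (Real.exp (-u))]
      apply mul_le_mul_of_nonneg_left _ (Real.exp_pos _).le
      calc (1:ℝ) = u ^ (0:ℝ) := (Real.rpow_zero u).symm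
        _ ≤ u ^ (x - 1) := Real.rpow_le_rpow_of_exponent_le h1u (by linarith)
  have mono2 : (∫ u in Set.Ioc (1:ℝ) 2, Real.exp (-u) * u ^ (x - 1)) ≤
      ∫ u in Set.Ioi (0:ℝ), Real.exp (-u) * u ^ (x - 1) := by
    apply setIntegral_mono_set hInt
    · filter_upwards [ae_restrict_mem measurableSet_Ioi] with u hu
      exact mul_nonneg (Real.exp_pos _).le (Real.rpow_nonneg (le_of_lt hu) _)
    · exact HasSubset.Subset.eventuallyLE (fun u hu => lt_trans one_pos hu.1)
  linarith [e1 ▸ mono1, mono2]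

/-- For `|k| < 1` and `y_α(t) = ∫_0^t E_{1−α,1}(−k (t−τ)^{1−α}) ξ dτ`, for each fixed
`t ∈ (0,1]` the limit of `y_α(t)` as `α → 1⁻` equals `ξ t/(k+1)`, which is the minimizer
of the limiting classical problem `min ∫_0^1 (k+1)² y'(t)² dt`, `y(0) = 0`,
`y(1) = ξ/(k+1)`. -/
theorem limit_of_fractional_extremal_as_alpha_to_one
    (k ξ : ℝ) (hk : |k| < 1) (t : ℝ) (ht : t ∈ Set.Ioc (0:ℝ) 1) :
    Filter.Tendsto
      (fun α : ℝ =>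
        ∫ τ in (0:ℝ)..t, mittagLeffler (1 - α) 1 (-k * (t - τ) ^ (1 - α)) * ξ)
      (nhdsWithin 1 (Set.Ioo 0 1)) (nhds (ξ * t / (k + 1))) ∧
    (∀ z : ℝ → ℝ, ContDiffOn ℝ 1 z (Set.Icc 0 1) →
      z 0 = 0 → z 1 = ξ / (k + 1) →
      (∫ s in (0:ℝ)..1, (k + 1) ^ 2 * (deriv (fun u => ξ * u / (k + 1)) s) ^ 2) ≤
        ∫ s in (0:ℝ)..1, (k + 1) ^ 2 * (deriv z s) ^ 2) := by
  obtain ⟨hkl, hkr⟩ := abs_lt.1 hk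
  have hk1 : (0:ℝ) < k + 1 := by linarith
  set c : ℝ := Real.exp (-1) - Real.exp (-2) with hc_def
  have hc : 0 < c := by
    have : Real.exp (-2) < Real.exp (-1) := Real.exp_lt_exp.2 (by norm_num)
    linarith
  obtain ⟨h0t, ht1⟩ := ht
  constructor
  · -- Part 1: the limit
    -- bound for the terms of the Mittag-Leffler series
    have hbound : ∀ α ∈ Set.Ioo (0:ℝ) 1, ∀ τ : ℝ, 0 ≤ t - τ → t - τ ≤ 1 → ∀ n : ℕ,
        ‖(-k * (t - τ) ^ (1 - α)) ^ n / Real.Gamma ((1 - α) * n + 1)‖ ≤ |k| ^ n / c := by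
      intro α hα τ hτ0 hτ1 n
      have hβ : 0 < 1 - α := by linarith [hα.2]
      have hb0 : 0 ≤ (t - τ) ^ (1 - α) := Real.rpow_nonneg hτ0 _
      have hb1 : (t - τ) ^ (1 - α) ≤ 1 := Real.rpow_le_one hτ0 hτ1 hβ.le
      have hG1 : (1:ℝ) ≤ (1 - α) * n + 1 := by
        have : (0:ℝ) ≤ (1 - α) * n := mul_nonneg hβ.le (Nat.cast_nonneg n)
        linarith
      have hGpos : 0 < Real.Gamma ((1 - α) * n + 1) :=
        Real.Gamma_pos_of_pos (by linarith)
      have hnum : ‖(-k * (t - τ) ^ (1 - α)) ^ n‖ ≤ |k| ^ n := by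
        rw [norm_pow, Real.norm_eq_abs]
        apply pow_le_pow_left₀ (abs_nonneg _) _ n
        rw [abs_mul, abs_neg]
        calc |k| * |(t - τ) ^ (1 - α)| ≤ |k| * 1 := by
              apply mul_le_mul_of_nonneg_left _ (abs_nonneg k)
              rw [abs_of_nonneg hb0]; exact hb1
          _ = |k| := mul_one _
      rw [norm_div, Real.norm_eq_abs (Real.Gamma _), abs_of_pos hGpos]
      exact div_le_div₀ (by positivity) hnum hc (aux_gamma_lb hG1)
    have key : Filter.Tendsto
        (fun α : ℝ =>
          ∫ τ in (0:ℝ)..t, mittagLeffler (1 - α) 1 (-k * (t - τ) ^ (1 - α)) * ξ)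
        (nhdsWithin 1 (Set.Ioo 0 1))
        (nhds (∫ τ in (0:ℝ)..t, (1 + k)⁻¹ * ξ)) := by
      apply intervalIntegral.tendsto_integral_filter_of_dominated_convergence
        (bound := fun _ => (1 - |k|)⁻¹ / c * |ξ|)
      · -- measurability
        filter_upwards [self_mem_nhdsWithin] with α hα
        rw [Set.uIoc_of_le h0t.le]
        apply ContinuousOn.aestronglyMeasurable _ measurableSet_Ioc
        apply ContinuousOn.mono _ (Set.Ioc_subset_Icc_self)
        apply ContinuousOn.mul _ continuousOn_const
        have : ContinuousOn
            (fun τ : ℝ => ∑' n : ℕ, (-k * (t - τ) ^ (1 - α)) ^ n /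
              Real.Gamma ((1 - α) * n + 1)) (Set.Icc 0 t) := by
          apply continuousOn_tsum (u := fun n => |k| ^ n / c)
          · intro n
            apply ContinuousOn.div_const
            apply ContinuousOn.pow
            apply ContinuousOn.mul continuousOn_const
            intro x hx
            apply ContinuousAt.continuousWithinAt
            exact ((Real.continuousAt_rpow_const _ _
              (Or.inr (by linarith [hα.2]))).comp
              ((continuous_const.sub continuous_id).continuousAt))
          · exact (summable_geometric_of_lt_one (abs_nonneg k) hk).div_const c
          · intro n τ hτ
            exact hbound α hα τ (by linarith [hτ.2]) (by linarith [hτ.1]) n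
        exact fun τ hτ => (this τ hτ).congr (fun σ hσ => rfl) rfl
      · -- uniform bound
        filter_upwards [self_mem_nhdsWithin] with α hα
        apply ae_of_all
        intro τ hτ
        rw [Set.uIoc_of_le h0t.le] at hτ
        have hτ0 : 0 ≤ t - τ := by linarith [hτ.2]
        have hτ1 : t - τ ≤ 1 := by linarith [hτ.1]
        rw [norm_mul]
        apply mul_le_mul _ le_rfl (norm_nonneg _)
            (div_nonneg (inv_nonneg.2 (by linarith)) hc.le)
        show ‖mittagLeffler (1 - α) 1 (-k * (t - τ) ^ (1 - α))‖ ≤ (1 - |k|)⁻¹ / c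
        unfold mittagLeffler
        have hs : HasSum (fun n : ℕ => |k| ^ n / c) ((1 - |k|)⁻¹ / c) :=
          (hasSum_geometric_of_lt_one (abs_nonneg k) hk).div_const c
        exact tsum_of_norm_bounded hs (fun n => hbound α hα τ hτ0 hτ1 n)
      · exact intervalIntegrable_const
      · -- pointwise limit
        have h_ae : ∀ᵐ τ : ℝ, τ ≠ t := by
          rw [ae_iff]
          have : {a : ℝ | ¬a ≠ t} = {t} := by ext a; simp
          rw [this]
          exact Real.volume_singleton
        filter_upwards [h_ae] with τ hτt hτ
        rw [Set.uIoc_of_le h0t.le] at hτ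
        have hτlt : τ < t := lt_of_le_of_ne hτ.2 hτt
        have hb : 0 < t - τ := by linarith
        have hml : Filter.Tendsto
            (fun α : ℝ => mittagLeffler (1 - α) 1 (-k * (t - τ) ^ (1 - α)))
            (nhdsWithin 1 (Set.Ioo 0 1)) (nhds ((1 + k)⁻¹)) := by
          have hlim := tendsto_tsum_of_dominated_convergence
            (𝓕 := nhdsWithin (1:ℝ) (Set.Ioo 0 1))
            (f := fun (α : ℝ) (n : ℕ) =>
              (-k * (t - τ) ^ (1 - α)) ^ n / Real.Gamma ((1 - α) * n + 1))
            (g := fun n : ℕ => (-k) ^ n)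
            (bound := fun n : ℕ => |k| ^ n / c)
            ((summable_geometric_of_lt_one (abs_nonneg k) hk).div_const c)
            ?_ ?_
          · have hgeom : (∑' n : ℕ, (-k) ^ n) = (1 + k)⁻¹ := by
              rw [tsum_geometric_of_norm_lt_one (by rwa [norm_neg, Real.norm_eq_abs])]
              rw [sub_neg_eq_add]
            rw [hgeom] at hlim
            exact hlim
          · -- termwise limits
            intro n
            have h1 : Filter.Tendsto (fun α : ℝ => (t - τ) ^ (1 - α)) (nhds 1)
                (nhds 1) := by
              have heq : (fun α : ℝ => (t - τ) ^ (1 - α)) =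
                  fun α : ℝ => Real.exp (Real.log (t - τ) * (1 - α)) := by
                funext α; rw [Real.rpow_def_of_pos hb]
              rw [heq]
              have : Filter.Tendsto (fun α : ℝ => Real.exp (Real.log (t - τ) * (1 - α)))
                  (nhds 1) (nhds (Real.exp (Real.log (t - τ) * (1 - 1)))) := by
                exact (Real.continuous_exp.comp
                  (continuous_const.mul (continuous_const.sub continuous_id))).tendsto 1
              simpa using this
            have h2 : Filter.Tendsto (fun α : ℝ => Real.Gamma ((1 - α) * n + 1))
                (nhds 1) (nhds 1) := by
              have hG : ContinuousAt Real.Gamma 1 := by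
                apply (Real.differentiableAt_Gamma _).continuousAt
                intro m h
                have h0 : (0:ℝ) ≤ (m:ℝ) := Nat.cast_nonneg m
                linarith
              have hcomp : Filter.Tendsto (fun α : ℝ => (1 - α) * n + 1) (nhds 1)
                  (nhds 1) := by
                have : Filter.Tendsto (fun α : ℝ => (1 - α) * n + 1) (nhds 1)
                    (nhds ((1 - 1) * n + 1)) :=
                  (((continuous_const.sub continuous_id).mul continuous_const).add
                    continuous_const).tendsto 1
                simpa using this
              simpa [Real.Gamma_one, Function.comp_def] using hG.tendsto.comp hcomp
            have := (((h1.const_mul (-k)).pow n).div h2 one_ne_zero)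
            simp only [mul_one, div_one] at this
            exact this.mono_left nhdsWithin_le_nhds
          · -- uniform bound for the tsum
            filter_upwards [self_mem_nhdsWithin] with α hα
            exact fun n => hbound α hα τ hb.le (by linarith [hτ.1]) n
        exact hml.mul tendsto_const_nhds
    have hval : (∫ τ in (0:ℝ)..t, (1 + k)⁻¹ * ξ) = ξ * t / (k + 1) := by
      rw [intervalIntegral.integral_const, smul_eq_mul]
      have h1k : (1:ℝ) + k ≠ 0 := by linarith
      field_simp
      ring
    rwa [hval] at key
  · -- Part 2: minimality
    intro z hz hz0 hz1
    set g : ℝ → ℝ := derivWithin z (Set.Icc 0 1) with hg_def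
    have hgc : ContinuousOn g (Set.Icc 0 1) :=
      hz.continuousOn_derivWithin (uniqueDiffOn_Icc one_pos) le_rfl
    have hdz : ∀ x ∈ Set.Ioo (0:ℝ) 1, HasDerivAt z (g x) x := by
      intro x hx
      have hmem : x ∈ Set.Icc (0:ℝ) 1 := Set.Ioo_subset_Icc_self hx
      have hd := ((hz.differentiableOn one_ne_zero) x hmem).hasDerivWithinAt
      exact hd.hasDerivAt (Icc_mem_nhds hx.1 hx.2)
    have hgint : IntervalIntegrable g volume 0 1 := by
      apply ContinuousOn.intervalIntegrable
      rwa [Set.uIcc_of_le (by norm_num : (0:ℝ) ≤ 1)]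
    have hftc : (∫ s in (0:ℝ)..1, g s) = ξ / (k + 1) := by
      rw [intervalIntegral.integral_eq_sub_of_hasDeriv_right_of_le (by norm_num)
        (hz.continuousOn) (fun x hx => ((hdz x hx).hasDerivWithinAt)) hgint]
      rw [hz0, hz1, sub_zero]
    -- replace deriv z by g in the integral
    have hcongr : (∫ s in (0:ℝ)..1, (k + 1) ^ 2 * (deriv z s) ^ 2) =
        ∫ s in (0:ℝ)..1, (k + 1) ^ 2 * (g s) ^ 2 := by
      apply intervalIntegral.integral_congr_ae
      have h_ae : ∀ᵐ s : ℝ, s ≠ 1 := by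
        rw [ae_iff]
        have : {a : ℝ | ¬a ≠ (1:ℝ)} = {1} := by ext a; simp
        rw [this]
        exact Real.volume_singleton
      filter_upwards [h_ae] with s hs1 hs
      rw [Set.uIoc_of_le (by norm_num : (0:ℝ) ≤ 1)] at hs
      have hs' : s ∈ Set.Ioo (0:ℝ) 1 := ⟨hs.1, lt_of_le_of_ne hs.2 hs1⟩
      rw [(hdz s hs').deriv]
    have hg2int : IntervalIntegrable (fun s => (k + 1) ^ 2 * (g s) ^ 2) volume 0 1 := by
      apply ContinuousOn.intervalIntegrable
      rw [Set.uIcc_of_le (by norm_num : (0:ℝ) ≤ 1)]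
      exact continuousOn_const.mul (hgc.pow 2)
    have hgmint : IntervalIntegrable (fun s => (2 * ξ * (k + 1)) * g s) volume 0 1 := by
      apply ContinuousOn.intervalIntegrable
      rw [Set.uIcc_of_le (by norm_num : (0:ℝ) ≤ 1)]
      exact continuousOn_const.mul hgc
    have hnonneg : 0 ≤ ∫ s in (0:ℝ)..1, ((k + 1) * g s - ξ) ^ 2 :=
      intervalIntegral.integral_nonneg (by norm_num) (fun s _ => sq_nonneg _)
    have h3 : (∫ s in (0:ℝ)..1, (2 * ξ * (k + 1)) * g s) = 2 * ξ ^ 2 := by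
      rw [intervalIntegral.integral_const_mul, hftc]
      have h1k : k + 1 ≠ 0 := by linarith
      field_simp
    have h4 : (∫ s in (0:ℝ)..1, (ξ:ℝ) ^ 2) = ξ ^ 2 := by
      rw [intervalIntegral.integral_const, smul_eq_mul]; ring
    have hexpand : (∫ s in (0:ℝ)..1, ((k + 1) * g s - ξ) ^ 2) =
        (∫ s in (0:ℝ)..1, (k + 1) ^ 2 * (g s) ^ 2) -
          (∫ s in (0:ℝ)..1, (2 * ξ * (k + 1)) * g s) + (∫ s in (0:ℝ)..1, (ξ:ℝ) ^ 2) := by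
      rw [← intervalIntegral.integral_sub hg2int hgmint,
        ← intervalIntegral.integral_add (hg2int.sub hgmint) intervalIntegrable_const]
      apply intervalIntegral.integral_congr
      intro s _
      ring
    have hlhs : (∫ s in (0:ℝ)..1, (k + 1) ^ 2 * (deriv (fun u => ξ * u / (k + 1)) s) ^ 2)
        = ξ ^ 2 := by
      have hderiv : ∀ s : ℝ, deriv (fun u => ξ * u / (k + 1)) s = ξ / (k + 1) := by
        intro s
        have heq : (fun u : ℝ => ξ * u / (k + 1)) = fun u : ℝ => (ξ / (k + 1)) * u := by
          funext u; ring
        rw [heq]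
        have := ((hasDerivAt_id s).const_mul (ξ / (k + 1))).deriv
        simpa using this
      simp_rw [hderiv]
      rw [intervalIntegral.integral_const, smul_eq_mul]
      have h1k : k + 1 ≠ 0 := by linarith
      field_simp
      ring
    rw [hlhs, hcongr]
    rw [h3, h4] at hexpand
    linarith [hexpand, hnonneg]
end
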